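/- arXiv:2107.09813 — 4 statements merged into one kernel-verified Lean document; each statement's English description precedes it below -/
import Mathlib

section
/- Let μ ∈ T and let g ∈ K[x]∖K. Then g is μ-minimal if and only if for every nonzero f ∈ K[x], writing the g-expansion f = Σ_s a_s g^s with deg(a_s) < deg(g), one has μ(f) = min_s μ(a_s g^s). -/
open Polynomial

namespace MLV

variable {K : Type*} [Field K] {Λ : Type*} [AddCommGroup Λ] [LinearOrder Λ] [IsOrderedAddMonoid Λ]

/-- A valuation on the field `K` with values in `Λ∞ = WithTop Λ`. -/
structure FieldVal (K : Type*) (Λ : Type*) [Field K] [AddCommGroup Λ] [LinearOrder Λ] [IsOrderedAddMonoid Λ] where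
  v : K → WithTop Λ
  map_one' : v 1 = 0
  map_zero' : v 0 = ⊤
  ne_top' : ∀ a : K, a ≠ 0 → v a ≠ ⊤
  map_mul' : ∀ a b : K, v (a * b) = v a + v b
  map_add' : ∀ a b : K, min (v a) (v b) ≤ v (a + b)

/-- `μ` is a node of the tree `T = T(Λ)`: a valuation on `K[x]` with values in `Λ∞`
whose restriction to `K` is `v`. -/
def IsValT (v : FieldVal K Λ) (μ : Polynomial K → WithTop Λ) : Prop :=
  μ 1 = 0 ∧ μ 0 = ⊤ ∧ (∀ f g : Polynomial K, μ (f * g) = μ f + μ g) ∧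
    (∀ f g : Polynomial K, min (μ f) (μ g) ≤ μ (f + g)) ∧
    ∀ a : K, μ (C a) = v.v a

/-- `g ∼_μ h` : `μ(g - h) > μ(g)`. -/
def MuEquiv (μ : Polynomial K → WithTop Λ) (g h : Polynomial K) : Prop :=
  μ g < μ (g - h)

/-- `h ∣_μ g` : `g ∼_μ f * h` for some `f`. -/
def MuDvd (μ : Polynomial K → WithTop Λ) (h g : Polynomial K) : Prop :=
  ∃ f : Polynomial K, MuEquiv μ g (f * h)

/-- `g ∈ K[x] \ K` is `μ`-minimal if it `μ`-divides no nonzero polynomial of smaller degree. -/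
def IsMuMinimal (μ : Polynomial K → WithTop Λ) (g : Polynomial K) : Prop :=
  0 < g.natDegree ∧
    ∀ f : Polynomial K, f ≠ 0 → f.degree < g.degree → ¬ MuDvd μ g f

/-- `g` is `μ`-irreducible. -/
def IsMuIrreducible (μ : Polynomial K → WithTop Λ) (g : Polynomial K) : Prop :=
  μ g ≠ ⊤ ∧ (¬ ∃ f : Polynomial K, MuEquiv μ (f * g) 1) ∧
    ∀ f h : Polynomial K, MuDvd μ g (f * h) → MuDvd μ g f ∨ MuDvd μ g h

/-- A (Maclane-Vaquié) key polynomial for `μ`. -/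
def IsKeyPol (μ : Polynomial K → WithTop Λ) (φ : Polynomial K) : Prop :=
  φ.Monic ∧ IsMuMinimal μ φ ∧ IsMuIrreducible μ φ

/-- An inner node: a valuation admitting key polynomials. -/
def IsInnerNode (μ : Polynomial K → WithTop Λ) : Prop :=
  ∃ φ : Polynomial K, IsKeyPol μ φ

/-- `deg(μ)`: the minimal degree of a key polynomial for `μ`. -/
noncomputable def degOf (μ : Polynomial K → WithTop Λ) : ℕ :=
  sInf {n : ℕ | ∃ φ : Polynomial K, IsKeyPol μ φ ∧ φ.natDegree = n}

/-- A key polynomial of minimal degree. -/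
def IsMinKeyPol (μ : Polynomial K → WithTop Λ) (φ : Polynomial K) : Prop :=
  IsKeyPol μ φ ∧ ∀ ψ : Polynomial K, IsKeyPol μ ψ → φ.natDegree ≤ ψ.natDegree

/-- the class `[φ]_μ` of key polynomials `μ`-equivalent to `φ`. -/
def KeyPolClass (μ : Polynomial K → WithTop Λ) (φ : Polynomial K) : Set (Polynomial K) :=
  {ψ : Polynomial K | IsKeyPol μ ψ ∧ MuEquiv μ ψ φ}

/-- The coefficient `a_s` of the `φ`-expansion `f = Σ_s a_s φ^s` (for `φ` monic nonconstant). -/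
noncomputable def expCoeff (φ f : Polynomial K) (s : ℕ) : Polynomial K :=
  (f /ₘ φ ^ s) %ₘ φ

/-- The augmented valuation `[μ; φ, γ]`, acting on `φ`-expansions by
`ν(Σ_s a_s φ^s) = min_s (μ(a_s) + s γ)`. -/
noncomputable def augVal (μ : Polynomial K → WithTop Λ) (φ : Polynomial K)
    (γ : WithTop Λ) (f : Polynomial K) : WithTop Λ :=
  (Finset.range (f.natDegree + 1)).inf'
    (Finset.nonempty_range_iff.mpr (Nat.succ_ne_zero _))
    fun s => μ (expCoeff φ f s) + s • γ

/-- The depth-zero valuation `ω_{a,δ}`, acting on `(x-a)`-expansions by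
`ω(Σ_s a_s (x-a)^s) = min_s (v(a_s) + s δ)`. -/
noncomputable def omegaVal (v : FieldVal K Λ) (a : K) (δ : WithTop Λ)
    (f : Polynomial K) : WithTop Λ :=
  (Finset.range (f.natDegree + 1)).inf'
    (Finset.nonempty_range_iff.mpr (Nat.succ_ne_zero _))
    fun s => v.v ((taylor a f).coeff s) + s • δ

/-- The tangent direction `t(μ,ν)`: monic polynomials of minimal degree with `μ(φ) < ν(φ)`. -/
def TangentDir (μ ν : Polynomial K → WithTop Λ) : Set (Polynomial K) :=
  {φ : Polynomial K | φ.Monic ∧ μ φ < ν φ ∧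
    ∀ ψ : Polynomial K, ψ.Monic → μ ψ < ν ψ → φ.natDegree ≤ ψ.natDegree}

/-- The set of finite values of `μ`. -/
def valSet (μ : Polynomial K → WithTop Λ) : Set Λ :=
  {γ : Λ | ∃ f : Polynomial K, μ f = (γ : WithTop Λ)}

/-- The value group `Γ_μ`. -/
def valGroup (μ : Polynomial K → WithTop Λ) : AddSubgroup Λ :=
  AddSubgroup.closure (valSet μ)

/-- `Γ = v(K^*)` as a subset of `Λ`. -/
def gammaSet (v : FieldVal K Λ) : Set Λ :=
  {γ : Λ | ∃ a : K, v.v a = (γ : WithTop Λ)}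

/-- The value group `Γ` of the base field valuation. -/
def baseGroup (v : FieldVal K Λ) : AddSubgroup Λ :=
  AddSubgroup.closure (gammaSet v)

/-- `μ` is commensurable over `v` : `Γ_μ/Γ` is torsion. -/
def IsCommensurable (v : FieldVal K Λ) (μ : Polynomial K → WithTop Λ) : Prop :=
  ∀ γ : Λ, γ ∈ valGroup μ → ∃ n : ℕ, 0 < n ∧ n • γ ∈ baseGroup v

/-- `Γ_μ^0 = {μ(a) : a ∈ K[x], 0 ≤ deg(a) < deg(μ)}`. -/
noncomputable def degZeroSet (μ : Polynomial K → WithTop Λ) : Set Λ :=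
  {δ : Λ | ∃ a : Polynomial K, a ≠ 0 ∧ a.natDegree < degOf μ ∧ μ a = (δ : WithTop Λ)}

/-- Equivalence of valuations: an order-preserving isomorphism `ι : Γ_μ → Γ_ν`
with `ν = ι ∘ μ`. -/
def ValEquiv (μ ν : Polynomial K → WithTop Λ) : Prop :=
  ∃ ι : valGroup μ ≃+ valGroup ν,
    Monotone ι ∧ (∀ f : Polynomial K, μ f = ⊤ ↔ ν f = ⊤) ∧
    ∀ (f : Polynomial K) (γ : Λ) (h : μ f = (γ : WithTop Λ)),
      ν f = ((ι ⟨γ, AddSubgroup.subset_closure ⟨f, h⟩⟩ : Λ) : WithTop Λ)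

/-- `β ∼_sme γ` : an order-preserving isomorphism `⟨Γ,β⟩ → ⟨Γ,γ⟩` fixing `Γ`
and mapping `β` to `γ`. -/
def SmeEquiv (v : FieldVal K Λ) (β γ : Λ) : Prop :=
  ∃ ι : (AddSubgroup.closure (gammaSet v ∪ {β}) : AddSubgroup Λ) ≃+
      (AddSubgroup.closure (gammaSet v ∪ {γ}) : AddSubgroup Λ),
    Monotone ι ∧
    (∀ (a : Λ) (ha : a ∈ gammaSet v),
      ((ι ⟨a, AddSubgroup.subset_closure (Set.mem_union_left _ ha)⟩ : Λ) = a)) ∧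
    ((ι ⟨β, AddSubgroup.subset_closure (Set.mem_union_right _ rfl)⟩ : Λ) = γ)

section Families

variable {ι : Type*} [LinearOrder ι]

/-- A totally ordered family of inner nodes of `T`, indexed order-isomorphically by a
totally ordered set, containing no maximal element. -/
def IsTOFamily (v : FieldVal K Λ) (ρ : ι → Polynomial K → WithTop Λ) : Prop :=
  (∀ i, IsValT v (ρ i)) ∧ (∀ i, IsInnerNode (ρ i)) ∧ StrictMono ρ ∧
    ∀ i : ι, ∃ j : ι, i < j

/-- `f` is `A`-stable: the values `ρ_i(f)` are eventually constant. -/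
def IsStablePoly (ρ : ι → Polynomial K → WithTop Λ) (f : Polynomial K) : Prop :=
  ∃ i : ι, ∀ j : ι, i ≤ j → ρ j f = ρ i f

/-- `β` is the stable value `ρ_A(f)`. -/
def IsStableVal (ρ : ι → Polynomial K → WithTop Λ) (f : Polynomial K)
    (β : WithTop Λ) : Prop :=
  ∃ i : ι, ∀ j : ι, i ≤ j → ρ j f = β

open Classical in
/-- The stability function `ρ_A` (junk value `⊤` on unstable polynomials). -/
noncomputable def stableVal (ρ : ι → Polynomial K → WithTop Λ) (f : Polynomial K) :
    WithTop Λ :=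
  if h : ∃ β : WithTop Λ, IsStableVal ρ f β then h.choose else ⊤

/-- The family has stable degree `m`. -/
def HasStableDeg (ρ : ι → Polynomial K → WithTop Λ) (m : ℕ) : Prop :=
  ∃ i : ι, ∀ j : ι, i ≤ j → degOf (ρ j) = m

/-- A continuous family: a totally ordered family of eventually constant degree. -/
def IsContFamily (v : FieldVal K Λ) (ρ : ι → Polynomial K → WithTop Λ) : Prop :=
  IsTOFamily v ρ ∧ ∃ m : ℕ, HasStableDeg ρ m

/-- The stable group `Γ_C`: stable values of nonzero stable polynomials. -/
def stableSet (ρ : ι → Polynomial K → WithTop Λ) : Set Λ :=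
  {δ : Λ | ∃ f : Polynomial K, f ≠ 0 ∧ IsStableVal ρ f (δ : WithTop Λ)}

/-- A limit key polynomial: monic, unstable, of minimal degree among unstable polynomials. -/
def IsLimKeyPol (ρ : ι → Polynomial K → WithTop Λ) (φ : Polynomial K) : Prop :=
  φ.Monic ∧ ¬ IsStablePoly ρ φ ∧
    ∀ f : Polynomial K, ¬ IsStablePoly ρ f → φ.natDegree ≤ f.natDegree

/-- An essential continuous family: `m(C) < m_∞(C) < ∞`. -/
def IsEssential (v : FieldVal K Λ) (ρ : ι → Polynomial K → WithTop Λ) : Prop :=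
  IsTOFamily v ρ ∧
    ∃ m : ℕ, HasStableDeg ρ m ∧
      ∃ φ : Polynomial K, IsLimKeyPol ρ φ ∧ m < φ.natDegree

/-- The limit augmentation `[C; φ, γ]`, acting on `φ`-expansions by
`ν(Σ_s a_s φ^s) = min_s (ρ_C(a_s) + s γ)`. -/
noncomputable def limAugVal (ρ : ι → Polynomial K → WithTop Λ) (φ : Polynomial K)
    (γ : WithTop Λ) (f : Polynomial K) : WithTop Λ :=
  (Finset.range (f.natDegree + 1)).inf'
    (Finset.nonempty_range_iff.mpr (Nat.succ_ne_zero _))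
    fun s => stableVal ρ (expCoeff φ f s) + s • γ

/-- Equivalence of totally ordered families: mutual cofinality. -/
def FamEquiv {κ : Type*} [LinearOrder κ] (ρ : ι → Polynomial K → WithTop Λ)
    (σ : κ → Polynomial K → WithTop Λ) : Prop :=
  (∀ i : ι, ∃ j : κ, ρ i ≤ σ j) ∧ ∀ j : κ, ∃ i : ι, σ j ≤ ρ i

end Families

end MLV

open MLV

section Aux

variable {K : Type*} [Field K] {Λ : Type*} [AddCommGroup Λ] [LinearOrder Λ] [IsOrderedAddMonoid Λ]
variable {v : FieldVal K Λ} {μ : Polynomial K → WithTop Λ}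

lemma mu_neg (hμ : IsValT v μ) (h : Polynomial K) : μ (-h) = μ h := by
  have h2 : μ (-1 : Polynomial K) + μ (-1) = 0 := by
    rw [← hμ.2.2.1]; norm_num; exact hμ.1
  have h3 : μ (-1 : Polynomial K) = 0 := by
    rcases eq_or_ne (μ (-1 : Polynomial K)) ⊤ with ht | hne
    · rw [ht] at h2; simp at h2
    · obtain ⟨c, hc⟩ := WithTop.ne_top_iff_exists.mp hne
      rw [← hc] at h2 ⊢
      norm_cast at h2 ⊢
      rcases lt_trichotomy c 0 with h | h | h
      · exact absurd h2 (ne_of_lt (by simpa using add_lt_add h h))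
      · exact h
      · exact absurd h2 (ne_of_gt (by simpa using add_lt_add h h))
  calc μ (-h) = μ ((-1) * h) := by rw [neg_one_mul]
    _ = μ (-1) + μ h := hμ.2.2.1 _ _
    _ = μ h := by rw [h3, zero_add]

lemma mu_sum_lower (hμ : IsValT v μ) (c : WithTop Λ) (hc : c < ⊤)
    (T : Finset ℕ) (h : ℕ → Polynomial K) (hall : ∀ s ∈ T, c < μ (h s)) :
    c < μ (∑ s ∈ T, h s) := by
  classical
  induction T using Finset.induction with
  | empty => simpa [hμ.2.1] using hc
  | @insert x T hx ih =>
    rw [Finset.sum_insert hx]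
    refine lt_of_lt_of_le ?_ (hμ.2.2.2.1 _ _)
    exact lt_min (hall x (Finset.mem_insert_self _ _))
      (ih fun s hs => hall s (Finset.mem_insert_of_mem hs))

lemma mu_exists_le_sum (hμ : IsValT v μ) (T : Finset ℕ) (hT : T.Nonempty)
    (h : ℕ → Polynomial K) : ∃ s ∈ T, μ (h s) ≤ μ (∑ t ∈ T, h t) := by
  classical
  induction hT using Finset.Nonempty.cons_induction with
  | singleton a => exact ⟨a, Finset.mem_singleton_self a, by rw [Finset.sum_singleton]⟩
  | cons a T ha hT ih =>
    rw [Finset.sum_cons]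
    rcases le_total (μ (h a)) (μ (∑ t ∈ T, h t)) with hle | hle
    · refine ⟨a, Finset.mem_cons_self _ _, ?_⟩
      calc μ (h a) = min (μ (h a)) (μ (∑ t ∈ T, h t)) := (min_eq_left hle).symm
        _ ≤ _ := hμ.2.2.2.1 _ _
    · obtain ⟨s, hs, hle'⟩ := ih
      refine ⟨s, Finset.mem_cons_of_mem hs, hle'.trans ?_⟩
      calc μ (∑ t ∈ T, h t) = min (μ (h a)) (μ (∑ t ∈ T, h t)) := (min_eq_right hle).symm
        _ ≤ _ := hμ.2.2.2.1 _ _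

/-- Existence of `g`-expansions. -/
lemma exists_expansion (g : Polynomial K) (hg : 0 < g.natDegree) (q : Polynomial K) :
    ∃ (n : ℕ) (b : ℕ → Polynomial K), (∀ s, (b s).degree < g.degree) ∧
      q = ∑ s ∈ Finset.range n, b s * g ^ s := by
  have hg0 : g ≠ 0 := fun h => by simp [h] at hg
  have hgd : (0 : WithBot ℕ) < g.degree := natDegree_pos_iff_degree_pos.mp hg
  have key : ∀ N : ℕ, ∀ q : Polynomial K, q.natDegree ≤ N →
      ∃ (n : ℕ) (b : ℕ → Polynomial K), (∀ s, (b s).degree < g.degree) ∧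
        q = ∑ s ∈ Finset.range n, b s * g ^ s := by
    intro N
    induction N with
    | zero =>
      intro q hq
      refine ⟨1, fun s => if s = 0 then q else 0, ?_, by simp⟩
      intro s
      rcases eq_or_ne s 0 with rfl | hs
      · simp only [if_pos rfl]
        calc q.degree ≤ 0 := degree_le_zero_iff.mpr (eq_C_of_natDegree_le_zero hq)
          _ < g.degree := hgd
      · simp only [if_neg hs, degree_zero]
        exact lt_of_le_of_lt bot_le hgd
    | succ N ih =>
      intro q hq
      by_cases hdq : q.degree < g.degree
      · refine ⟨1, fun s => if s = 0 then q else 0, ?_, by simp⟩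
        intro s
        rcases eq_or_ne s 0 with rfl | hs
        · simpa using hdq
        · simp only [if_neg hs, degree_zero]
          exact lt_of_le_of_lt bot_le hgd
      · push_neg at hdq
        have hq0 : q ≠ 0 := by
          intro h; rw [h] at hdq; simp only [degree_zero] at hdq
          exact absurd (le_bot_iff.mp hdq) (degree_ne_bot.mpr hg0)
        set c := q / g with hc
        set r := q % g with hr
        have hqe : g * c + r = q := EuclideanDomain.div_add_mod q g
        have hrdeg : r.degree < g.degree := EuclideanDomain.mod_lt q hg0
        have hcdeg : c.natDegree ≤ N := by
          have hdadd : g.degree + c.degree = q.degree := degree_add_div hg0 hdq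
          have hc0 : c ≠ 0 := by
            intro h
            rw [h] at hdadd
            simp only [degree_zero, WithBot.add_bot] at hdadd
            exact absurd hdadd.symm (degree_ne_bot.mpr hq0)
          have hlt : c.degree < q.degree := by
            rw [← hdadd]
            calc c.degree = 0 + c.degree := (zero_add _).symm
              _ < g.degree + c.degree :=
                WithBot.add_lt_add_right (degree_ne_bot.mpr hc0) hgd
          have := (natDegree_lt_natDegree_iff hc0).mpr hlt
          omega
        obtain ⟨m, b, hbdeg, hbe⟩ := ih c hcdeg
        refine ⟨m + 1, fun s => if s = 0 then r else b (s - 1), fun s => ?_, ?_⟩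
        · rcases eq_or_ne s 0 with rfl | hs
          · simpa using hrdeg
          · simpa [if_neg hs] using hbdeg (s - 1)
        · have h1 : ∑ s ∈ Finset.range (m + 1),
              (if s = 0 then r else b (s - 1)) * g ^ s
              = (∑ i ∈ Finset.range m, b i * g ^ (i + 1)) + r := by
            rw [Finset.sum_range_succ']
            simp
          rw [h1]
          calc q = g * c + r := hqe.symm
            _ = g * (∑ s ∈ Finset.range m, b s * g ^ s) + r := by rw [← hbe]
            _ = (∑ i ∈ Finset.range m, b i * g ^ (i + 1)) + r := by
                rw [Finset.mul_sum]
                congr 1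
                exact Finset.sum_congr rfl fun i _ => by rw [pow_succ]; ring
  exact key q.natDegree q le_rfl

end Aux

/-- A polynomial `g ∈ K[x] \ K` is `μ`-minimal if and only if `μ` acts as the minimum on
`g`-expansions: for every nonzero `f = Σ_s a_s g^s` with `deg a_s < deg g`,
`μ(f) = min_s μ(a_s g^s)`. -/
theorem statement_0 {K : Type*} [Field K] {Λ : Type*} [AddCommGroup Λ] [LinearOrder Λ] [IsOrderedAddMonoid Λ]
    (v : FieldVal K Λ) (μ : Polynomial K → WithTop Λ) (hμ : IsValT v μ)
    (g : Polynomial K) (hg : 0 < g.natDegree) :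
    IsMuMinimal μ g ↔
      ∀ f : Polynomial K, f ≠ 0 →
        ∀ (n : ℕ) (a : ℕ → Polynomial K),
          (∀ s : ℕ, (a s).degree < g.degree) →
          f = ∑ s ∈ Finset.range n, a s * g ^ s →
          (∀ s < n, μ f ≤ μ (a s * g ^ s)) ∧ ∃ s < n, μ f = μ (a s * g ^ s) := by
  constructor
  · rintro ⟨-, hmin⟩ f hf n a hdeg hexp
    have hn : n ≠ 0 := by
      rintro rfl
      simp only [Finset.range_zero, Finset.sum_empty] at hexp
      exact hf hexp
    have claim : ∀ s < n, μ f ≤ μ (a s * g ^ s) := by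
      by_contra hcon
      push_neg at hcon
      obtain ⟨t, htn, ht⟩ := hcon
      have hex : ∃ s, μ (a s * g ^ s) < μ f := ⟨t, ht⟩
      classical
      set s0 := Nat.find hex with hs0def
      have hQ : μ (a s0 * g ^ s0) < μ f := Nat.find_spec hex
      have hmin0 : ∀ s < s0, μ f ≤ μ (a s * g ^ s) := fun s hs =>
        le_of_not_gt (Nat.find_min hex hs)
      have hs0n : s0 < n := lt_of_le_of_lt (Nat.find_min' hex ht) htn
      obtain ⟨m, rfl⟩ : ∃ m, n = s0 + 1 + m := ⟨n - s0 - 1, by omega⟩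
      set δ := μ (a s0 * g ^ s0) with hδ
      have hδtop : δ < ⊤ := lt_of_lt_of_le hQ le_top
      set P := ∑ s ∈ Finset.range s0, a s * g ^ s with hP
      set R := ∑ i ∈ Finset.range m, a (s0 + 1 + i) * g ^ i with hR
      have hsplit : f - P = g ^ s0 * (a s0 + g * R) := by
        have hsum : ∑ i ∈ Finset.range m, a (s0 + 1 + i) * g ^ (s0 + 1 + i)
            = g ^ s0 * (g * R) := by
          rw [hR, Finset.mul_sum, Finset.mul_sum]
          refine Finset.sum_congr rfl fun i _ => ?_
          rw [pow_add, pow_add, pow_one]; ring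
        rw [hexp, Finset.sum_range_add, Finset.sum_range_succ, hsum, hP]
        ring
      have hPlow : δ < μ (-P) := by
        rw [mu_neg hμ, hP]
        exact mu_sum_lower hμ δ hδtop _ _ fun s hs =>
          lt_of_lt_of_le hQ (hmin0 s (Finset.mem_range.mp hs))
      have hsub : δ < μ (f - P) := by
        calc δ < min (μ f) (μ (-P)) := lt_min hQ hPlow
          _ ≤ μ (f + -P) := hμ.2.2.2.1 _ _
          _ = μ (f - P) := by rw [sub_eq_add_neg]
      rw [hsplit, hμ.2.2.1] at hsub
      have hδeq : δ = μ (g ^ s0) + μ (a s0) := by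
        rw [hδ, hμ.2.2.1, add_comm]
      rw [hδeq] at hsub
      have hgtop : μ (g ^ s0) ≠ ⊤ := by
        intro h
        rw [hδeq, h, top_add] at hδtop
        exact absurd hδtop (lt_irrefl _)
      have hkey : μ (a s0) < μ (a s0 + g * R) :=
        (WithTop.add_lt_add_iff_left hgtop).mp hsub
      have ha0 : a s0 ≠ 0 := by
        intro h
        rw [h, hμ.2.1, add_top] at hδeq
        rw [hδeq] at hδtop
        exact absurd hδtop (lt_irrefl _)
      refine hmin (a s0) ha0 (hdeg s0) ⟨-R, ?_⟩
      show μ (a s0) < μ (a s0 - -R * g)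
      have : a s0 - -R * g = a s0 + g * R := by ring
      rw [this]
      exact hkey
    refine ⟨claim, ?_⟩
    obtain ⟨s, hs, hle⟩ := mu_exists_le_sum hμ (Finset.range n)
      (Finset.nonempty_range_iff.mpr hn) (fun s => a s * g ^ s)
    rw [← hexp] at hle
    exact ⟨s, Finset.mem_range.mp hs,
      le_antisymm (claim s (Finset.mem_range.mp hs)) hle⟩
  · intro H
    refine ⟨hg, fun f hf0 hdegf ⟨q, hq⟩ => ?_⟩
    obtain ⟨n, b, hbdeg, hbe⟩ := exists_expansion g hg q
    set F := f - q * g with hF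
    have hg0 : g ≠ 0 := fun h => by simp [h] at hg
    have hFne : F ≠ 0 := by
      intro h
      have hfe : f = q * g := by rw [hF] at h; linear_combination h
      have hq0 : q ≠ 0 := by
        rintro rfl
        rw [zero_mul] at hfe
        exact hf0 hfe
      have : g.degree ≤ f.degree := by
        rw [hfe, degree_mul]
        calc g.degree = 0 + g.degree := (zero_add _).symm
          _ ≤ q.degree + g.degree := by
            apply add_le_add_left
            exact zero_le_degree_iff.mpr hq0
      exact absurd hdegf (not_lt_of_ge this)
    set a : ℕ → Polynomial K := fun s => if s = 0 then f else -(b (s - 1)) with ha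
    have hadeg : ∀ s, (a s).degree < g.degree := by
      intro s
      rcases eq_or_ne s 0 with rfl | hs
      · simpa [ha] using hdegf
      · simpa [ha, if_neg hs] using hbdeg (s - 1)
    have hFexp : F = ∑ s ∈ Finset.range (n + 1), a s * g ^ s := by
      have h1 : ∑ s ∈ Finset.range (n + 1), a s * g ^ s
          = (∑ i ∈ Finset.range n, -(b i * g ^ (i + 1))) + f := by
        rw [Finset.sum_range_succ']
        congr 1
        · exact Finset.sum_congr rfl fun i _ => by simp [ha]
        · simp [ha]
      have h2 : ∑ i ∈ Finset.range n, b i * g ^ i * g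
          = ∑ i ∈ Finset.range n, b i * g ^ (i + 1) :=
        Finset.sum_congr rfl fun i _ => by rw [pow_succ, mul_assoc]
      rw [h1, hF, hbe, Finset.sum_mul, h2, Finset.sum_neg_distrib]
      ring
    obtain ⟨hle, -⟩ := H F hFne (n + 1) a hadeg hFexp
    have h0 : μ F ≤ μ f := by
      have := hle 0 (Nat.succ_pos n)
      simpa [ha] using this
    exact absurd (lt_of_lt_of_le hq h0) (lt_irrefl _)
end

section
/- A valuation μ ∈ T is a maximal element of the poset T if and only if KP(μ) = ∅, i.e. μ admits no key polynomial. -/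
open Polynomial

open MLV


section AuxMLV

open Polynomial

variable {K : Type*} [Field K] {Λ : Type*} [AddCommGroup Λ] [LinearOrder Λ] [IsOrderedAddMonoid Λ]
variable {v : FieldVal K Λ} {μ ν : Polynomial K → WithTop Λ}

private lemma aux_self_add_eq_zero {a : WithTop Λ} (h : a + a = 0) : a = 0 := by
  induction a using WithTop.recTopCoe with
  | top => simp at h
  | coe a =>
    have h' : a + a = 0 := by exact_mod_cast h
    rcases lt_trichotomy a 0 with h1 | h1 | h1
    · exact absurd h' (ne_of_lt (by simpa using add_lt_add h1 h1))
    · exact_mod_cast h1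
    · exact absurd h' (ne_of_gt (by simpa using add_lt_add h1 h1))

private lemma val_neg_one (hμ : IsValT v μ) : μ (-1) = 0 := by
  have h1 : μ (-1 : Polynomial K) = v.v (-1 : K) := by
    rw [← hμ.2.2.2.2]; norm_num
  have h2 : v.v (-1 : K) + v.v (-1 : K) = 0 := by
    rw [← v.map_mul']; norm_num; exact v.map_one'
  rw [h1]; exact aux_self_add_eq_zero h2

private lemma val_neg (hμ : IsValT v μ) (f : Polynomial K) : μ (-f) = μ f := by
  have e : -f = -1 * f := by ring
  rw [e, hμ.2.2.1, val_neg_one hμ, zero_add]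

private lemma val_sub (hμ : IsValT v μ) (f g : Polynomial K) :
    min (μ f) (μ g) ≤ μ (f - g) := by
  rw [sub_eq_add_neg]
  have h := hμ.2.2.2.1 f (-g)
  rwa [val_neg hμ] at h

private lemma val_add_left (hμ : IsValT v μ) {f g : Polynomial K} (h : μ f < μ g) :
    μ (f + g) = μ f := by
  refine le_antisymm ?_ ?_
  · have h2 := val_sub hμ (f + g) g
    rw [add_sub_cancel_right] at h2
    rcases le_or_gt (μ (f + g)) (μ g) with hc | hc
    · rwa [min_eq_left hc] at h2
    · rw [min_eq_right hc.le] at h2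
      exact absurd h2 (not_le.2 h)
  · have h1 := hμ.2.2.2.1 f g
    rwa [min_eq_left h.le] at h1

private lemma muEquiv_val (hμ : IsValT v μ) {f g : Polynomial K} (h : MuEquiv μ f g) :
    μ g = μ f := by
  have h' : μ f < μ (f - g) := h
  have hge : μ f ≤ μ g := by
    have h2 := val_sub hμ f (f - g)
    rw [sub_sub_cancel] at h2
    rwa [min_eq_left h'.le] at h2
  have hle : μ g ≤ μ f := by
    by_contra hc
    push_neg at hc
    have h3 := hμ.2.2.2.1 g (f - g)
    rw [show g + (f - g) = f by ring] at h3
    exact absurd h3 (not_le.2 (lt_min hc h'))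
  exact le_antisymm hle hge

private lemma aux_addlt {a b c d : WithTop Λ} (ha : a ≠ ⊤) (hb : b ≠ ⊤)
    (h1 : a ≤ c) (h2 : b < d) : a + b < c + d := by
  lift a to Λ using ha
  lift b to Λ using hb
  induction c using WithTop.recTopCoe with
  | top => rw [top_add, ← WithTop.coe_add]; exact WithTop.coe_lt_top _
  | coe c =>
    induction d using WithTop.recTopCoe with
    | top => rw [add_top, ← WithTop.coe_add]; exact WithTop.coe_lt_top _
    | coe d =>
      rw [← WithTop.coe_add, ← WithTop.coe_add, WithTop.coe_lt_coe]
      exact add_lt_add_of_le_of_lt (by exact_mod_cast h1) (by exact_mod_cast h2)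

private lemma key_mod_le (hμ : IsValT v μ) {φ : Polynomial K} (hm : φ.Monic)
    (hmin : IsMuMinimal μ φ) (f : Polynomial K) : μ f ≤ μ (f %ₘ φ) := by
  by_contra hc
  push_neg at hc
  have hr0 : f %ₘ φ ≠ 0 := by
    intro h0
    rw [h0, hμ.2.1] at hc
    exact not_top_lt hc
  refine hmin.2 (f %ₘ φ) hr0 (Polynomial.degree_modByMonic_lt f hm) ⟨-(f /ₘ φ), ?_⟩
  show μ (f %ₘ φ) < μ (f %ₘ φ - -(f /ₘ φ) * φ)
  rw [show f %ₘ φ - -(f /ₘ φ) * φ = f by linear_combination Polynomial.modByMonic_add_div f φ]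
  exact hc

private lemma key_mul_mod (hμ : IsValT v μ) {φ : Polynomial K} (hm : φ.Monic)
    (hmin : IsMuMinimal μ φ) (hirr : IsMuIrreducible μ φ) (a b : Polynomial K)
    (ha : a.degree < φ.degree) (hb : b.degree < φ.degree) :
    μ ((a * b) %ₘ φ) = μ a + μ b := by
  by_cases ha0 : a = 0
  · rw [ha0, zero_mul, Polynomial.zero_modByMonic, hμ.2.1, top_add]
  by_cases hb0 : b = 0
  · rw [hb0, mul_zero, Polynomial.zero_modByMonic, hμ.2.1, add_top]
  have hid := Polynomial.modByMonic_add_div (a * b) φ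
  set r := (a * b) %ₘ φ with hrdef
  set q := (a * b) /ₘ φ with hqdef
  rcases lt_trichotomy (μ r) (μ (a * b)) with h | h | h
  · exfalso
    have hr0 : r ≠ 0 := by
      intro h0
      rw [h0, hμ.2.1] at h
      exact not_top_lt h
    refine hmin.2 r hr0 (Polynomial.degree_modByMonic_lt _ hm) ⟨-q, ?_⟩
    show μ r < μ (r - -q * φ)
    rw [show r - -q * φ = a * b by linear_combination hid]
    exact h
  · rw [h, hμ.2.2.1]
  · exfalso
    have hdvd : MuDvd μ φ (a * b) := by
      refine ⟨q, ?_⟩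
      show μ (a * b) < μ (a * b - q * φ)
      rw [show a * b - q * φ = r by linear_combination -hid]
      exact h
    rcases hirr.2.2 a b hdvd with hca | hcb
    · exact hmin.2 a ha0 ha hca
    · exact hmin.2 b hb0 hb hcb

private lemma aug_valT (hμ : IsValT v μ) {φ : Polynomial K} (hφ : IsKeyPol μ φ) :
    IsValT v (fun f => μ (f %ₘ φ)) := by
  obtain ⟨hm, hmin, hirr⟩ := hφ
  have hdφ : (0 : ℕ) < φ.natDegree := hmin.1
  have hdeg0 : (0 : WithBot ℕ) < φ.degree := by
    have h := Polynomial.degree_lt_degree (p := (1 : Polynomial K)) (q := φ)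
      (by simpa using hdφ)
    simpa using h
  have hself : ∀ p : Polynomial K, p.degree < φ.degree → p %ₘ φ = p :=
    fun p hp => (Polynomial.modByMonic_eq_self_iff hm).2 hp
  refine ⟨?_, ?_, ?_, ?_, ?_⟩
  · show μ (1 %ₘ φ) = 0
    rw [hself 1 (by simpa [Polynomial.degree_one] using hdeg0)]
    exact hμ.1
  · show μ (0 %ₘ φ) = ⊤
    rw [Polynomial.zero_modByMonic]
    exact hμ.2.1
  · intro f g
    show μ ((f * g) %ₘ φ) = μ (f %ₘ φ) + μ (g %ₘ φ)
    have d1 : φ ∣ f - f %ₘ φ :=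
      ⟨f /ₘ φ, by linear_combination -Polynomial.modByMonic_add_div f φ⟩
    have d2 : φ ∣ g - g %ₘ φ :=
      ⟨g /ₘ φ, by linear_combination -Polynomial.modByMonic_add_div g φ⟩
    have hdv : φ ∣ f * g - (f %ₘ φ) * (g %ₘ φ) := by
      rw [show f * g - (f %ₘ φ) * (g %ₘ φ)
          = (f - f %ₘ φ) * g + (f %ₘ φ) * (g - g %ₘ φ) by ring]
      exact dvd_add (d1.mul_right g) (d2.mul_left _)
    have emod : (f * g) %ₘ φ = ((f %ₘ φ) * (g %ₘ φ)) %ₘ φ := by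
      have h0 : (f * g - (f %ₘ φ) * (g %ₘ φ)) %ₘ φ = 0 :=
        (Polynomial.modByMonic_eq_zero_iff_dvd hm).2 hdv
      rw [Polynomial.sub_modByMonic] at h0
      exact sub_eq_zero.mp h0
    rw [emod]
    exact key_mul_mod hμ hm hmin hirr _ _ (Polynomial.degree_modByMonic_lt f hm)
      (Polynomial.degree_modByMonic_lt g hm)
  · intro f g
    show min (μ (f %ₘ φ)) (μ (g %ₘ φ)) ≤ μ ((f + g) %ₘ φ)
    rw [Polynomial.add_modByMonic]
    exact hμ.2.2.2.1 _ _
  · intro a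
    show μ (C a %ₘ φ) = v.v a
    rw [hself (C a) (lt_of_le_of_lt Polynomial.degree_C_le hdeg0)]
    exact hμ.2.2.2.2 a

private lemma unit_val_aux (hν : IsValT v ν) {w g : Polynomial K}
    (htop : ν (w * g - 1) = ⊤) : ν (w * g) = 0 := by
  have hge : (0 : WithTop Λ) ≤ ν (w * g) := by
    have h := hν.2.2.2.1 1 (w * g - 1)
    rw [show (1 : Polynomial K) + (w * g - 1) = w * g by ring, hν.1, htop] at h
    simpa using h
  have hle : ν (w * g) ≤ 0 := by
    have h := val_sub hν (w * g) (w * g - 1)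
    rw [show w * g - (w * g - 1) = 1 by ring, hν.1, htop] at h
    simpa using h
  exact le_antisymm hle hge

private lemma caseA_max (hμ : IsValT v μ) {p : Polynomial K} (hp0 : p ≠ 0)
    (hptop : μ p = ⊤) : ∀ ν : Polynomial K → WithTop Λ, IsValT v ν → μ ≤ ν → μ = ν := by
  have hSne : {n : ℕ | ∃ g : Polynomial K, g ≠ 0 ∧ μ g = ⊤ ∧ g.natDegree = n}.Nonempty :=
    ⟨p.natDegree, p, hp0, hptop, rfl⟩
  obtain ⟨p₀, hp₀0, hp₀top, hp₀deg⟩ := Nat.sInf_mem hSne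
  have hirr : Irreducible p₀ := by
    constructor
    · intro hu
      have h1 := Polynomial.natDegree_eq_zero_of_isUnit hu
      have h2 := Polynomial.eq_C_of_natDegree_eq_zero h1
      have hc : p₀.coeff 0 ≠ 0 := fun h => hp₀0 (by rw [h2, h, map_zero])
      exact v.ne_top' _ hc (by rw [← hμ.2.2.2.2, ← h2]; exact hp₀top)
    · intro a b hab
      have key : ∀ x y : Polynomial K, p₀ = x * y → μ x = ⊤ → IsUnit y := by
        intro x y hxy hx
        have hx0 : x ≠ 0 := fun h => hp₀0 (by rw [hxy, h, zero_mul])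
        have hy0 : y ≠ 0 := fun h => hp₀0 (by rw [hxy, h, mul_zero])
        have hmem : x.natDegree ∈ {n : ℕ | ∃ g : Polynomial K, g ≠ 0 ∧ μ g = ⊤ ∧ g.natDegree = n} :=
          ⟨x, hx0, hx, rfl⟩
        have hle := Nat.sInf_le hmem
        have hdeg : p₀.natDegree = x.natDegree + y.natDegree := by
          rw [hxy]; exact Polynomial.natDegree_mul hx0 hy0
        have hy : y.natDegree = 0 := by omega
        rw [Polynomial.eq_C_of_natDegree_eq_zero hy]
        refine Polynomial.isUnit_C.2 (isUnit_iff_ne_zero.2 fun h => hy0 ?_)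
        rw [Polynomial.eq_C_of_natDegree_eq_zero hy, h, map_zero]
      have hmul := hμ.2.2.1 a b
      rw [← hab, hp₀top] at hmul
      rcases WithTop.add_eq_top.1 hmul.symm with h | h
      · exact Or.inr (key a b hab h)
      · exact Or.inl (key b a (by rw [hab, mul_comm]) h)
  intro ν hν hle
  funext f
  by_contra hne
  have hlt : μ f < ν f := (hle f).lt_of_ne hne
  have hftop : μ f ≠ ⊤ := ne_top_of_lt hlt
  have hdvd : ¬ p₀ ∣ f := by
    rintro ⟨t, ht⟩
    exact hftop (by rw [ht, hμ.2.2.1, hp₀top, top_add])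
  obtain ⟨u, w, huw⟩ := hirr.coprime_iff_not_dvd.2 hdvd
  have hwf1 : μ (w * f - 1) = ⊤ := by
    rw [show w * f - 1 = -u * p₀ by linear_combination huw, hμ.2.2.1, hp₀top, add_top]
  have hνwf1 : ν (w * f - 1) = ⊤ := top_le_iff.1 (hwf1 ▸ hle _)
  have h1 := unit_val_aux hμ hwf1
  have h2 := unit_val_aux hν hνwf1
  rw [hμ.2.2.1] at h1
  rw [hν.2.2.1] at h2
  have hμw : μ w ≠ ⊤ := by
    intro h
    rw [h, top_add] at h1
    exact absurd h1 (by simp)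
  have hfin := aux_addlt hμw hftop (hle w) hlt
  rw [h1, h2] at hfin
  exact lt_irrefl _ hfin

private lemma caseB_max (hμ : IsValT v μ)
    (hts : ∀ g : Polynomial K, g ≠ 0 → μ g ≠ ⊤)
    (hnokey : ¬ ∃ φ : Polynomial K, IsKeyPol μ φ) :
    ∀ ν : Polynomial K → WithTop Λ, IsValT v ν → μ ≤ ν → μ = ν := by
  intro ν hν hle
  by_contra hne
  obtain ⟨f, hf⟩ : ∃ f : Polynomial K, μ f ≠ ν f := by
    rw [funext_iff] at hne
    push_neg at hne
    exact hne
  have hlt : μ f < ν f := (hle f).lt_of_ne hf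
  have hmon : ∀ g : Polynomial K, g ≠ 0 → μ g < ν g →
      ∃ h : Polynomial K, h.Monic ∧ μ h < ν h ∧ h.natDegree = g.natDegree := by
    intro g hg0 hglt
    have hlc : (g.leadingCoeff)⁻¹ ≠ 0 :=
      inv_ne_zero (Polynomial.leadingCoeff_ne_zero.2 hg0)
    refine ⟨g * C (g.leadingCoeff)⁻¹, Polynomial.monic_mul_leadingCoeff_inv hg0, ?_,
      Polynomial.natDegree_mul_C hlc⟩
    have hc : v.v (g.leadingCoeff)⁻¹ ≠ ⊤ := v.ne_top' _ hlc
    rw [hμ.2.2.1, hν.2.2.1, hμ.2.2.2.2, hν.2.2.2.2]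
    rw [add_comm (μ g), add_comm (ν g)]
    exact aux_addlt hc (hts g hg0) le_rfl hglt
  have hf0 : f ≠ 0 := by
    intro h
    exact hf (by rw [h, hμ.2.1, hν.2.1])
  have hSne : {n : ℕ | ∃ ψ : Polynomial K, ψ.Monic ∧ μ ψ < ν ψ ∧ ψ.natDegree = n}.Nonempty := by
    obtain ⟨h, h1, h2, h3⟩ := hmon f hf0 hlt
    exact ⟨f.natDegree, h, h1, h2, h3⟩
  obtain ⟨φ, hφm, hφlt, hφdeg⟩ := Nat.sInf_mem hSne
  have hφ0 : φ ≠ 0 := hφm.ne_zero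
  have hμφ : μ φ ≠ ⊤ := hts φ hφ0
  have hsmall' : ∀ g : Polynomial K, g.natDegree < φ.natDegree → μ g = ν g := by
    intro g hgd
    by_cases hg0 : g = 0
    · rw [hg0, hμ.2.1, hν.2.1]
    refine le_antisymm (hle g) ?_
    by_contra hc
    push_neg at hc
    obtain ⟨h, h1, h2, h3⟩ := hmon g hg0 hc
    have hmem : g.natDegree ∈ {n : ℕ | ∃ ψ : Polynomial K, ψ.Monic ∧ μ ψ < ν ψ ∧ ψ.natDegree = n} :=
      ⟨h, h1, h2, h3⟩
    have hsle := Nat.sInf_le hmem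
    omega
  have hdpos : 0 < φ.natDegree := by
    rcases Nat.eq_zero_or_pos φ.natDegree with h | h
    · exfalso
      rw [hφm.natDegree_eq_zero.1 h, hμ.1, hν.1] at hφlt
      exact lt_irrefl _ hφlt
    · exact h
  have hmin : IsMuMinimal μ φ := by
    refine ⟨hdpos, ?_⟩
    rintro r hr0 hrdeg ⟨h, hh⟩
    have hrnd : r.natDegree < φ.natDegree := Polynomial.natDegree_lt_natDegree hr0 hrdeg
    have hνr : μ r = ν r := hsmall' r hrnd
    have hh' : μ r < μ (r - h * φ) := hh
    have hh0 : h ≠ 0 := by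
      rintro rfl
      rw [zero_mul, sub_zero] at hh'
      exact lt_irrefl _ hh'
    have hhφ : μ (h * φ) = μ r := muEquiv_val hμ hh
    have hν1 : μ r < ν (h * φ) := by
      rw [hν.2.2.1, show μ r = μ h + μ φ by rw [← hμ.2.2.1, hhφ]]
      exact aux_addlt (hts h hh0) hμφ (hle h) hφlt
    have hν2 : μ r < ν (r - h * φ) := lt_of_lt_of_le hh' (hle _)
    have h3 := hν.2.2.2.1 (r - h * φ) (h * φ)
    rw [show r - h * φ + h * φ = r by ring] at h3
    have hfin : μ r < ν r := lt_of_lt_of_le (lt_min hν2 hν1) h3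
    rw [hνr] at hfin
    exact lt_irrefl _ hfin
  have hdvd_lt : ∀ g : Polynomial K, MuDvd μ φ g → μ g < ν g := by
    rintro g ⟨h, hh⟩
    have hh' : μ g < μ (g - h * φ) := hh
    have hh0 : h ≠ 0 := by
      rintro rfl
      rw [zero_mul, sub_zero] at hh'
      exact lt_irrefl _ hh'
    have hhφ : μ (h * φ) = μ g := muEquiv_val hμ hh
    have hν1 : μ g < ν (h * φ) := by
      rw [hν.2.2.1, show μ g = μ h + μ φ by rw [← hμ.2.2.1, hhφ]]
      exact aux_addlt (hts h hh0) hμφ (hle h) hφlt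
    have hν2 : μ g < ν (g - h * φ) := lt_of_lt_of_le hh' (hle _)
    have h3 := hν.2.2.2.1 (g - h * φ) (h * φ)
    rw [show g - h * φ + h * φ = g by ring] at h3
    exact lt_of_lt_of_le (lt_min hν2 hν1) h3
  have hlt_dvd : ∀ g : Polynomial K, μ g < ν g → MuDvd μ φ g := by
    intro g hglt
    have hg0 : g ≠ 0 := by
      intro h
      rw [h, hμ.2.1, hν.2.1] at hglt
      exact lt_irrefl _ hglt
    have hgtop : μ g ≠ ⊤ := ne_top_of_lt hglt
    have hid := Polynomial.modByMonic_add_div g φ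
    set r := g %ₘ φ with hrdef
    set q := g /ₘ φ with hqdef
    by_cases hr0 : r = 0
    · refine ⟨q, ?_⟩
      show μ g < μ (g - q * φ)
      rw [show g - q * φ = r by linear_combination -hid, hr0, hμ.2.1]
      exact lt_top_iff_ne_top.2 hgtop
    · have hrnd : r.natDegree < φ.natDegree :=
        Polynomial.natDegree_lt_natDegree hr0 (Polynomial.degree_modByMonic_lt g hφm)
      have hrν : μ r = ν r := hsmall' r hrnd
      have hq0 : q ≠ 0 := by
        intro h
        rw [h, mul_zero, add_zero] at hid
        rw [← hid, hrν] at hglt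
        exact lt_irrefl _ hglt
      have eg : g - q * φ = r := by linear_combination -hid
      rcases lt_trichotomy (μ (q * φ)) (μ r) with hc | hc | hc
      · refine ⟨q, ?_⟩
        show μ g < μ (g - q * φ)
        have hgval : μ g = μ (q * φ) := by
          rw [show g = q * φ + r by linear_combination -hid]
          exact val_add_left hμ hc
        rw [eg, hgval]
        exact hc
      · exfalso
        have hgge : μ r ≤ μ g := by
          have h3 := hμ.2.2.2.1 (q * φ) r
          rw [show q * φ + r = g by linear_combination hid, hc, min_self] at h3
          exact h3
        rcases eq_or_lt_of_le hgge with he | hlt2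
        · have hν1 : μ r < ν (q * φ) := by
            rw [hν.2.2.1, show μ r = μ q + μ φ by rw [← hμ.2.2.1, hc]]
            exact aux_addlt (hts q hq0) hμφ (hle q) hφlt
          have hν2 : μ r < ν g := he ▸ hglt
          have h3 := val_sub hν g (q * φ)
          rw [eg] at h3
          have hfin : μ r < ν r := lt_of_lt_of_le (lt_min hν2 hν1) h3
          rw [hrν] at hfin
          exact lt_irrefl _ hfin
        · refine hmin.2 r hr0 (Polynomial.degree_modByMonic_lt g hφm) ⟨-q, ?_⟩
          show μ r < μ (r - -q * φ)
          rw [show r - -q * φ = g by linear_combination hid]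
          exact hlt2
      · exfalso
        have hgval : μ g = μ r := by
          rw [show g = r + q * φ by linear_combination -hid]
          exact val_add_left hμ hc
        have hν1 : μ r < ν (q * φ) := lt_of_lt_of_le hc (hle _)
        have hν2 : μ r < ν g := hgval ▸ hglt
        have h3 := val_sub hν g (q * φ)
        rw [eg] at h3
        have hfin : μ r < ν r := lt_of_lt_of_le (lt_min hν2 hν1) h3
        rw [hrν] at hfin
        exact lt_irrefl _ hfin
  have hirr : IsMuIrreducible μ φ := by
    refine ⟨hμφ, ?_, ?_⟩
    · rintro ⟨h, hh⟩
      have h1 : μ (1 : Polynomial K) = μ (h * φ) := muEquiv_val hμ hh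
      have hh' : μ (h * φ) < μ (h * φ - 1) := hh
      have hdvd1 : MuDvd μ φ 1 := by
        refine ⟨h, ?_⟩
        show μ (1 : Polynomial K) < μ (1 - h * φ)
        rw [show (1 : Polynomial K) - h * φ = -(h * φ - 1) by ring, val_neg hμ, h1]
        exact hh'
      have hfin := hdvd_lt 1 hdvd1
      rw [hμ.1, hν.1] at hfin
      exact lt_irrefl _ hfin
    · intro a b hab
      have habl := hdvd_lt _ hab
      by_contra hcon
      push_neg at hcon
      obtain ⟨hca, hcb⟩ := hcon
      have ha : μ a = ν a := le_antisymm (hle a)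
        (by by_contra hc; push_neg at hc; exact hca (hlt_dvd a hc))
      have hb : μ b = ν b := le_antisymm (hle b)
        (by by_contra hc; push_neg at hc; exact hcb (hlt_dvd b hc))
      rw [hμ.2.2.1, hν.2.2.1, ← ha, ← hb] at habl
      exact lt_irrefl _ habl
  exact hnokey ⟨φ, hφm, hmin, hirr⟩

end AuxMLV

/-- A valuation `μ ∈ T` is a maximal element of the poset `T` if and only if
`KP(μ) = ∅`. -/
theorem statement_1 {K : Type*} [Field K] {Λ : Type*} [AddCommGroup Λ] [LinearOrder Λ] [IsOrderedAddMonoid Λ]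
    (v : FieldVal K Λ) (μ : Polynomial K → WithTop Λ) (hμ : IsValT v μ) :
    (∀ ν : Polynomial K → WithTop Λ, IsValT v ν → μ ≤ ν → μ = ν) ↔
      ¬ ∃ φ : Polynomial K, IsKeyPol μ φ :=  by
  constructor
  · rintro hmax ⟨φ, hφ⟩
    have hν := aug_valT hμ hφ
    have hle : μ ≤ fun f => μ (f %ₘ φ) := fun f => key_mod_le hμ hφ.1 hφ.2.1 f
    have heq := hmax _ hν hle
    have hφval : μ φ = μ (φ %ₘ φ) := congrFun heq φ
    rw [(Polynomial.modByMonic_eq_zero_iff_dvd hφ.1).2 dvd_rfl, hμ.2.1] at hφval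
    exact hφ.2.2.1 hφval
  · intro hnokey ν hν hle
    by_cases hsupp : ∃ p : Polynomial K, p ≠ 0 ∧ μ p = ⊤
    · obtain ⟨p, hp0, hptop⟩ := hsupp
      exact caseA_max hμ hp0 hptop ν hν hle
    · push_neg at hsupp
      exact caseB_max hμ hsupp hnokey ν hν hle
end

section
/- Let μ < ν in T and let φ ∈ t(μ,ν). Then: (1) φ ∈ KP(μ) and t(μ,ν) = [φ]_μ; moreover, if ν is an inner node then deg(μ) ≤ deg(ν). (2) For every nonzero f ∈ K[x], μ(f) = ν(f) holds if and only if φ does not μ-divide f. (3) If μ < ν < ρ in T, then t(μ,ρ) = t(μ,ν); in particular, for all f ∈ K[x], μ(f) = ρ(f) if and only if μ(f) = ν(f). -/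
open Polynomial

open MLV

namespace MLVProof
open MLV Polynomial

variable {K : Type*} [Field K] {Λ : Type*} [AddCommGroup Λ] [LinearOrder Λ] [IsOrderedAddMonoid Λ]
variable {v : FieldVal K Λ} {μ ν : Polynomial K → WithTop Λ} {φ : Polynomial K}

lemma add_self_zero {a : WithTop Λ} (h : a + a = 0) : a = 0 := by
  cases a with
  | top => simp at h
  | coe a =>
    have h' : a + a = 0 := by exact_mod_cast h
    rcases lt_trichotomy a 0 with h1 | h1 | h1
    · have h2 : a + a < 0 + 0 := add_lt_add h1 h1
      rw [add_zero] at h2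
      exact absurd h' h2.ne
    · exact_mod_cast h1
    · have h2 : (0 : Λ) + 0 < a + a := add_lt_add h1 h1
      rw [add_zero] at h2
      exact absurd h' h2.ne'

lemma val_neg (hμ : IsValT v μ) (g : Polynomial K) : μ (-g) = μ g := by
  have hm : μ (-1 : Polynomial K) + μ (-1 : Polynomial K) = 0 := by
    rw [← hμ.2.2.1]; norm_num [hμ.1]
  have h0 : μ (-1 : Polynomial K) = 0 := add_self_zero hm
  calc μ (-g) = μ ((-1) * g) := by rw [neg_one_mul]
    _ = μ (-1 : Polynomial K) + μ g := hμ.2.2.1 _ _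
    _ = μ g := by rw [h0, zero_add]

lemma sub_min (hμ : IsValT v μ) (g h : Polynomial K) :
    min (μ g) (μ h) ≤ μ (g - h) := by
  have := hμ.2.2.2.1 g (-h)
  rwa [val_neg hμ h, ← sub_eq_add_neg] at this

lemma val_sub_comm (hμ : IsValT v μ) (g h : Polynomial K) : μ (g - h) = μ (h - g) := by
  rw [← val_neg hμ (h - g), neg_sub]

lemma muEquiv_eq (hμ : IsValT v μ) {g h : Polynomial K} (he : MuEquiv μ g h) :
    μ g = μ h := by
  have h1 : min (μ g) (μ (g - h)) ≤ μ h := by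
    have := sub_min hμ g (g - h); simpa using this
  have h1' : μ g ≤ μ h := by rwa [min_eq_left he.le] at h1
  have h2 : min (μ (g - h)) (μ h) ≤ μ g := by
    have := hμ.2.2.2.1 (g - h) h; simpa using this
  refine le_antisymm h1' ?_
  by_contra hc; push_neg at hc
  exact absurd h2 (not_le.mpr (lt_min he hc))

lemma muEquiv_symm (hμ : IsValT v μ) {g h : Polynomial K} (he : MuEquiv μ g h) :
    MuEquiv μ h g := by
  have h1 : μ g = μ h := muEquiv_eq hμ he
  have h2 : μ (h - g) = μ (g - h) := val_sub_comm hμ h g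
  rw [MuEquiv, h2, ← h1]; exact he

lemma add_eq_left (hμ : IsValT v μ) {g h : Polynomial K} (hc : μ g < μ h) :
    μ (g + h) = μ g := by
  refine le_antisymm ?_ ?_
  · have hm : min (μ (g + h)) (μ h) ≤ μ g := by
      have := sub_min hμ (g + h) h; simpa using this
    by_contra hcc; push_neg at hcc
    exact absurd hm (not_le.mpr (lt_min hcc hc))
  · have := hμ.2.2.2.1 g h
    rwa [min_eq_left hc.le] at this

lemma add_eq_min (hμ : IsValT v μ) {g h : Polynomial K} (hne : μ g ≠ μ h) :
    μ (g + h) = min (μ g) (μ h) := by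
  rcases hne.lt_or_gt with hc | hc
  · rw [add_eq_left hμ hc, min_eq_left hc.le]
  · rw [add_comm, add_eq_left hμ hc, min_eq_right hc.le]

lemma deg_pos (hμ : IsValT v μ) (hν : IsValT v ν) (hφ : φ ∈ TangentDir μ ν) :
    0 < φ.natDegree := by
  by_contra hc; push_neg at hc
  have h1 : φ = 1 := (hφ.1.natDegree_eq_zero).mp (Nat.le_zero.mp hc)
  have := hφ.2.1
  rw [h1, hμ.1, hν.1] at this
  exact lt_irrefl _ this

lemma stepA (hμ : IsValT v μ) (hν : IsValT v ν) (hle : ∀ f, μ f ≤ ν f)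
    (hφ : φ ∈ TangentDir μ ν) {f : Polynomial K} (hdeg : f.natDegree < φ.natDegree) :
    μ f = ν f := by
  by_cases hf : f = 0
  · rw [hf, hμ.2.1, hν.2.1]
  · have hc : f.leadingCoeff ≠ 0 := leadingCoeff_ne_zero.mpr hf
    set ξ := f * Polynomial.C f.leadingCoeff⁻¹ with hξdef
    have hmon : ξ.Monic := monic_mul_leadingCoeff_inv hf
    have hdξ : ξ.natDegree = f.natDegree :=
      natDegree_eq_of_degree_eq (degree_mul_leadingCoeff_inv f hf)
    have hμν : μ ξ = ν ξ := by
      rcases eq_or_lt_of_le (hle ξ) with h | h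
      · exact h
      · exact absurd (hφ.2.2 ξ hmon h) (by omega)
    have hfξ : ξ * Polynomial.C f.leadingCoeff = f := by
      rw [hξdef, mul_assoc, ← Polynomial.C_mul, inv_mul_cancel₀ hc, Polynomial.C_1, mul_one]
    have e1 : μ f = μ ξ + v.v f.leadingCoeff := by
      conv_lhs => rw [← hfξ]
      rw [hμ.2.2.1, hμ.2.2.2.2]
    have e2 : ν f = ν ξ + v.v f.leadingCoeff := by
      conv_lhs => rw [← hfξ]
      rw [hν.2.2.1, hν.2.2.2.2]
    rw [e1, e2, hμν]

lemma dvd_imp_lt (hμ : IsValT v μ) (hν : IsValT v ν) (hle : ∀ f, μ f ≤ ν f)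
    (hφ : φ ∈ TangentDir μ ν) {f : Polynomial K} (hdvd : MuDvd μ φ f) : μ f < ν f := by
  obtain ⟨a, ha⟩ := hdvd
  have ha' : μ f < μ (f - a * φ) := ha
  have hfeq : μ (a * φ) = μ f := (muEquiv_eq hμ ha).symm
  have hμf_ne : μ f ≠ ⊤ := fun h => not_top_lt (h ▸ ha')
  have hμa_ne : μ a ≠ ⊤ := by
    intro h
    rw [hμ.2.2.1, h, top_add] at hfeq
    exact hμf_ne hfeq.symm
  have key : μ f < ν (a * φ) := by
    have h1 : μ f = μ a + μ φ := by rw [← hfeq, hμ.2.2.1]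
    have h2 : μ a + μ φ < μ a + ν φ := WithTop.add_lt_add_left hμa_ne hφ.2.1
    have h3 : μ a + ν φ ≤ ν a + ν φ := add_le_add_left (hle a) _
    rw [hν.2.2.1, h1]
    exact lt_of_lt_of_le h2 h3
  have h4 : μ f < ν (f - a * φ) := lt_of_lt_of_le ha (hle _)
  have h5 : min (ν (f - a * φ)) (ν (a * φ)) ≤ ν f := by
    have := hν.2.2.2.1 (f - a * φ) (a * φ); simpa using this
  exact lt_of_lt_of_le (lt_min h4 key) h5

lemma lt_imp_dvd (hμ : IsValT v μ) (hν : IsValT v ν) (hle : ∀ f, μ f ≤ ν f)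
    (hφ : φ ∈ TangentDir μ ν) {f : Polynomial K} (hlt' : μ f < ν f) : MuDvd μ φ f := by
  have hdpos := deg_pos hμ hν hφ
  set a := f %ₘ φ with hadef
  set q := f /ₘ φ with hqdef
  have heq : a + q * φ = f := by rw [mul_comm]; exact modByMonic_add_div f φ
  have hfa : f - q * φ = a := by rw [← heq]; ring
  have hfq : f - a = q * φ := by rw [← heq]; ring
  have hna : a.natDegree < φ.natDegree := by
    by_cases h0 : a = 0
    · rw [h0]; simpa using hdpos
    · exact natDegree_lt_natDegree h0 (degree_modByMonic_lt f hφ.1)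
  have hma : μ a = ν a := stepA hμ hν hle hφ hna
  have hμf_ne : μ f ≠ ⊤ := fun h => not_top_lt (h ▸ hlt')
  have hqf : μ (q * φ) ≤ μ f := by
    by_contra hgt; push_neg at hgt
    have h1 : μ f ≤ μ a := by
      have := sub_min hμ f (q * φ)
      rw [hfa, min_eq_left hgt.le] at this
      exact this
    have h2 : μ a ≤ μ f := by
      by_contra hcc; push_neg at hcc
      have hmm := hμ.2.2.2.1 a (q * φ)
      rw [heq] at hmm
      exact absurd hmm (not_le.mpr (lt_min hcc hgt))
    have h4 : ν a = μ f := by rw [← hma]; exact le_antisymm h2 h1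
    have h5 : min (ν f) (ν (q * φ)) ≤ ν a := by
      have := sub_min hν f (q * φ); rwa [hfa] at this
    have h6 : μ f < min (ν f) (ν (q * φ)) :=
      lt_min hlt' (lt_of_lt_of_le hgt (hle _))
    rw [h4] at h5
    exact absurd (lt_of_lt_of_le h6 h5) (lt_irrefl _)
  rcases lt_or_ge (μ (q * φ)) (μ a) with hcase | hcase
  · have h1 : μ f ≤ μ (q * φ) := by
      by_contra hcc; push_neg at hcc
      have hm2 : min (μ f) (μ a) ≤ μ (q * φ) := by
        have := sub_min hμ f a; rwa [hfq] at this
      exact absurd hm2 (not_le.mpr (lt_min hcc hcase))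
    refine ⟨q, ?_⟩
    rw [MuEquiv, hfa]
    exact lt_of_le_of_lt h1 hcase
  · exfalso
    have h2 : μ (q * φ) ≤ μ a := by
      have := sub_min hμ f (q * φ)
      rwa [hfa, min_eq_right hqf] at this
    have heqa : μ a = μ (q * φ) := le_antisymm hcase h2
    have hν1 : ν a < ν f := by
      rw [← hma]
      exact lt_of_le_of_lt (le_trans hcase hqf) hlt'
    have hν2 : ν (q * φ) ≤ ν a := by
      have h5 : min (ν f) (ν (q * φ)) ≤ ν a := by
        have := sub_min hν f (q * φ); rwa [hfa] at this
      by_contra hcc; push_neg at hcc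
      exact absurd h5 (not_le.mpr (lt_min hν1 hcc))
    have hν3 : ν (q * φ) = μ (q * φ) :=
      le_antisymm (le_trans hν2 (by rw [← hma, heqa])) (hle _)
    have hμq_ne : μ q ≠ ⊤ := by
      have hne : μ (q * φ) ≠ ⊤ := fun h =>
        hμf_ne (top_le_iff.mp (h ▸ hqf))
      rw [hμ.2.2.1] at hne
      exact fun h => hne (by rw [h, top_add])
    have hstrict : μ (q * φ) < ν (q * φ) := by
      rw [hμ.2.2.1, hν.2.2.1]
      calc μ q + μ φ < μ q + ν φ := WithTop.add_lt_add_left hμq_ne hφ.2.1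
        _ ≤ ν q + ν φ := add_le_add_left (hle q) _
    rw [hν3] at hstrict
    exact lt_irrefl _ hstrict

lemma eq_iff_not_dvd (hμ : IsValT v μ) (hν : IsValT v ν) (hle : ∀ f, μ f ≤ ν f)
    (hφ : φ ∈ TangentDir μ ν) (f : Polynomial K) : μ f = ν f ↔ ¬ MuDvd μ φ f := by
  constructor
  · intro h hdvd
    have := dvd_imp_lt hμ hν hle hφ hdvd
    rw [h] at this; exact lt_irrefl _ this
  · intro h
    rcases eq_or_lt_of_le (hle f) with h1 | h1
    · exact h1
    · exact absurd (lt_imp_dvd hμ hν hle hφ h1) h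

lemma isKeyPol (hμ : IsValT v μ) (hν : IsValT v ν) (hle : ∀ f, μ f ≤ ν f)
    (hφ : φ ∈ TangentDir μ ν) : IsKeyPol μ φ := by
  refine ⟨hφ.1, ⟨deg_pos hμ hν hφ, ?_⟩, ne_top_of_lt hφ.2.1, ?_, ?_⟩
  · intro f hf hdeg hdvd
    have h1 := dvd_imp_lt hμ hν hle hφ hdvd
    have h2 := stepA hμ hν hle hφ (natDegree_lt_natDegree hf hdeg)
    rw [h2] at h1; exact lt_irrefl _ h1
  · rintro ⟨f, hf⟩
    have h0 : μ (f * φ) = μ 1 := muEquiv_eq hμ hf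
    have hdvd : MuDvd μ φ 1 := by
      refine ⟨f, ?_⟩
      rw [MuEquiv, val_sub_comm hμ 1 (f * φ), ← h0]
      exact hf
    have := dvd_imp_lt hμ hν hle hφ hdvd
    rw [hμ.1, hν.1] at this
    exact lt_irrefl _ this
  · intro f h hdvd
    by_contra hcon
    push_neg at hcon
    have hf := (eq_iff_not_dvd hμ hν hle hφ f).mpr hcon.1
    have hh := (eq_iff_not_dvd hμ hν hle hφ h).mpr hcon.2
    have h1 := dvd_imp_lt hμ hν hle hφ hdvd
    rw [hμ.2.2.1, hν.2.2.1, hf, hh] at h1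
    exact lt_irrefl _ h1

lemma t_subset (hμ : IsValT v μ) (hν : IsValT v ν) (hle : ∀ f, μ f ≤ ν f)
    (hφ : φ ∈ TangentDir μ ν) : TangentDir μ ν ⊆ KeyPolClass μ φ := by
  intro ψ hψ
  refine ⟨isKeyPol hμ hν hle hψ, ?_⟩
  by_cases hef : ψ = φ
  · rw [MuEquiv, hef, sub_self, hμ.2.1]
    exact lt_of_lt_of_le hφ.2.1 le_top
  · have hnd : ψ.natDegree = φ.natDegree :=
      le_antisymm (hψ.2.2 φ hφ.1 hφ.2.1) (hφ.2.2 ψ hψ.1 hψ.2.1)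
    set r := ψ - φ with hrdef
    have hrne : r ≠ 0 := sub_ne_zero.mpr hef
    have hψφeq : ψ - r = φ := by rw [hrdef]; ring
    have hdd : ψ.degree = φ.degree := by
      rw [degree_eq_natDegree hψ.1.ne_zero, degree_eq_natDegree hφ.1.ne_zero, hnd]
    have hdeg : r.natDegree < φ.natDegree := by
      have h1 := degree_sub_lt hdd hψ.1.ne_zero (by rw [hψ.1.leadingCoeff, hφ.1.leadingCoeff])
      have h2 : r.degree < φ.degree := by rw [hrdef, ← hdd]; exact h1
      exact natDegree_lt_natDegree hrne h2
    have hmr : μ r = ν r := stepA hμ hν hle hφ hdeg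
    rw [MuEquiv]
    by_contra hcon; push_neg at hcon
    have h1 : ν r < ν ψ := by
      rw [← hmr]; exact lt_of_le_of_lt hcon hψ.2.1
    have h2 : ν φ ≤ ν r := by
      have hm : min (ν ψ) (ν φ) ≤ ν r := sub_min hν ψ φ
      by_contra hcc; push_neg at hcc
      exact absurd hm (not_le.mpr (lt_min h1 hcc))
    have h3 : ν r ≤ ν φ := by
      have hm : min (ν ψ) (ν r) ≤ ν φ := by
        have := sub_min hν ψ r; rwa [hψφeq] at this
      rwa [min_eq_right h1.le] at hm
    have h5 : μ r ≤ μ φ := by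
      have hm : min (μ ψ) (μ r) ≤ μ φ := by
        have := sub_min hμ ψ r; rwa [hψφeq] at this
      rwa [min_eq_right hcon] at hm
    have h6 : ν φ ≤ μ φ := by
      rw [le_antisymm h2 h3, ← hmr]; exact h5
    exact absurd hφ.2.1 (not_lt.mpr h6)

lemma t_supset (hμ : IsValT v μ) (hν : IsValT v ν) (hle : ∀ f, μ f ≤ ν f)
    (hφ : φ ∈ TangentDir μ ν) : KeyPolClass μ φ ⊆ TangentDir μ ν := by
  rintro ψ ⟨hkey, heqv⟩
  have hψν : μ ψ < ν ψ :=
    dvd_imp_lt hμ hν hle hφ ⟨1, by simpa only [one_mul] using heqv⟩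
  refine ⟨hkey.1, hψν, ?_⟩
  intro χ hχm hχlt
  have hle' : ψ.natDegree ≤ φ.natDegree := by
    by_contra hc; push_neg at hc
    have hsym : MuEquiv μ φ ψ := muEquiv_symm hμ heqv
    have hdvd : MuDvd μ ψ φ := ⟨1, by simpa only [one_mul] using hsym⟩
    have hdlt : φ.degree < ψ.degree := by
      rw [degree_eq_natDegree hφ.1.ne_zero, degree_eq_natDegree hkey.1.ne_zero]
      exact_mod_cast hc
    exact hkey.2.1.2 φ hφ.1.ne_zero hdlt hdvd
  exact le_trans hle' (hφ.2.2 χ hχm hχlt)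

lemma no_small_nu_minimal (hμ : IsValT v μ) (hν : IsValT v ν) (hle : ∀ f, μ f ≤ ν f)
    (hφ : φ ∈ TangentDir μ ν) {ψ : Polynomial K} (hmon : ψ.Monic)
    (hpos : 0 < ψ.natDegree) (hled : ψ.natDegree ≤ φ.natDegree)
    (hmin : ∀ f : Polynomial K, f ≠ 0 → f.degree < ψ.degree → ¬ MuDvd ν ψ f)
    (heqψ : μ ψ = ν ψ) : False := by
  set q := φ /ₘ ψ with hqdef
  set r := φ %ₘ ψ with hrdef
  have heq' : r + q * ψ = φ := by rw [mul_comm]; exact modByMonic_add_div φ ψ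
  have hdr : r.degree < ψ.degree := degree_modByMonic_lt φ hmon
  have hnr : r.natDegree < φ.natDegree := by
    by_cases h0 : r = 0
    · rw [h0]; simpa using lt_of_lt_of_le hpos hled
    · exact lt_of_lt_of_le (natDegree_lt_natDegree h0 hdr) hled
  have hnq : q.natDegree < φ.natDegree := by
    rw [hqdef, natDegree_divByMonic φ hmon]; omega
  have hmr : μ r = ν r := stepA hμ hν hle hφ hnr
  have hmq : μ q = ν q := stepA hμ hν hle hφ hnq
  have hmqψ : μ (q * ψ) = ν (q * ψ) := by rw [hμ.2.2.1, hν.2.2.1, hmq, heqψ]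
  have hlow : min (ν (q * ψ)) (ν r) ≤ μ φ := by
    have hmm := hμ.2.2.2.1 r (q * ψ)
    rw [heq'] at hmm
    calc min (ν (q * ψ)) (ν r) = min (μ r) (μ (q * ψ)) := by rw [hmqψ, hmr, min_comm]
      _ ≤ μ φ := hmm
  by_cases hAB : ν (q * ψ) = ν r
  · rcases le_or_gt (ν φ) (ν (q * ψ)) with hc | hc
    · have h1 : ν φ ≤ μ φ :=
        le_trans hc (le_trans (le_of_eq (min_eq_left (le_of_eq hAB)).symm) hlow)
      exact absurd hφ.2.1 (not_lt.mpr h1)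
    · have hane : ν (q * ψ) ≠ ⊤ := ne_top_of_lt hc
      have hr0 : r ≠ 0 := by
        intro h0
        rw [h0, hν.2.1] at hAB
        exact hane hAB
      refine hmin r hr0 hdr ⟨-q, ?_⟩
      rw [MuEquiv, show r - -q * ψ = φ from by rw [← heq']; ring, ← hAB]
      exact hc
  · have hνφ : ν φ = min (ν r) (ν (q * ψ)) := by
      have := add_eq_min hν (show ν r ≠ ν (q * ψ) from fun h => hAB h.symm)
      rwa [heq'] at this
    have h1 : ν φ ≤ μ φ := by rw [hνφ, min_comm]; exact hlow
    exact absurd hφ.2.1 (not_lt.mpr h1)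

lemma tangent_nonempty (hμ : IsValT v μ) (hν : IsValT v ν) (hlt : μ < ν) :
    ∃ φ : Polynomial K, φ ∈ TangentDir μ ν := by
  have hle : ∀ f, μ f ≤ ν f := fun f => hlt.le f
  have hex : ∃ f : Polynomial K, μ f < ν f := by
    by_contra hc; push_neg at hc
    exact hlt.ne (funext fun f => le_antisymm (hle f) (hc f))
  obtain ⟨f, hf⟩ := hex
  have hf0 : f ≠ 0 := by
    intro h; rw [h, hμ.2.1, hν.2.1] at hf; exact lt_irrefl _ hf
  set ξ := f * Polynomial.C f.leadingCoeff⁻¹ with hξdef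
  have hmon : ξ.Monic := monic_mul_leadingCoeff_inv hf0
  have hξ : μ ξ < ν ξ := by
    rw [hξdef, hμ.2.2.1, hν.2.2.1, hμ.2.2.2.2, hν.2.2.2.2]
    have hcne : v.v (f.leadingCoeff⁻¹) ≠ ⊤ :=
      v.ne_top' _ (inv_ne_zero (leadingCoeff_ne_zero.mpr hf0))
    exact WithTop.add_lt_add_right hcne hf
  have hS : ξ.natDegree ∈ {n : ℕ | ∃ ψ : Polynomial K, ψ.Monic ∧ μ ψ < ν ψ ∧ ψ.natDegree = n} :=
    ⟨ξ, hmon, hξ, rfl⟩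
  obtain ⟨ψ, hψm, hψlt, hψd⟩ := Nat.sInf_mem (Set.nonempty_of_mem hS)
  exact ⟨ψ, hψm, hψlt, fun χ hχm hχlt => hψd ▸ Nat.sInf_le ⟨χ, hχm, hχlt, rfl⟩⟩

end MLVProof

open MLVProof in
/-- Properties of the tangent direction `t(μ,ν)` for `μ < ν` in `T`. -/
theorem statement_2 {K : Type*} [Field K] {Λ : Type*} [AddCommGroup Λ] [LinearOrder Λ] [IsOrderedAddMonoid Λ]
    (v : FieldVal K Λ) (μ ν : Polynomial K → WithTop Λ)
    (hμ : IsValT v μ) (hν : IsValT v ν) (hlt : μ < ν)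
    (φ : Polynomial K) (hφ : φ ∈ TangentDir μ ν) :
    (IsKeyPol μ φ ∧ TangentDir μ ν = KeyPolClass μ φ ∧
      (IsInnerNode ν → degOf μ ≤ degOf ν)) ∧
    (∀ f : Polynomial K, f ≠ 0 → (μ f = ν f ↔ ¬ MuDvd μ φ f)) ∧
    (∀ ρ : Polynomial K → WithTop Λ, IsValT v ρ → ν < ρ →
      TangentDir μ ρ = TangentDir μ ν ∧
        ∀ f : Polynomial K, (μ f = ρ f ↔ μ f = ν f)) := by
  have hle : ∀ f, μ f ≤ ν f := fun f => hlt.le f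
  have hkey : IsKeyPol μ φ := isKeyPol hμ hν hle hφ
  refine ⟨⟨hkey, ?_, ?_⟩, ?_, ?_⟩
  · exact Set.Subset.antisymm (t_subset hμ hν hle hφ) (t_supset hμ hν hle hφ)
  · rintro ⟨ψ0, hψ0⟩
    have hSν : {n : ℕ | ∃ ψ : Polynomial K, IsKeyPol ν ψ ∧ ψ.natDegree = n}.Nonempty :=
      ⟨ψ0.natDegree, ψ0, hψ0, rfl⟩
    obtain ⟨ψ, hψkey, hψd⟩ := Nat.sInf_mem hSν
    have h1 : degOf μ ≤ φ.natDegree := Nat.sInf_le ⟨φ, hkey, rfl⟩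
    have h2 : φ.natDegree ≤ ψ.natDegree := by
      by_contra hc; push_neg at hc
      have heqψ : μ ψ = ν ψ := stepA hμ hν hle hφ hc
      exact no_small_nu_minimal hμ hν hle hφ hψkey.1 hψkey.2.1.1 hc.le hψkey.2.1.2 heqψ
    calc degOf μ ≤ φ.natDegree := h1
      _ ≤ ψ.natDegree := h2
      _ = degOf ν := hψd
  · intro f _
    exact eq_iff_not_dvd hμ hν hle hφ f
  · intro ρ hρ hνρ
    have hleνρ : ∀ f, ν f ≤ ρ f := fun f => hνρ.le f
    have hleμρ : ∀ f, μ f ≤ ρ f := fun f => le_trans (hle f) (hleνρ f)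
    obtain ⟨φ', hφ'⟩ := tangent_nonempty hν hρ hνρ
    have hφ'key : IsKeyPol ν φ' := isKeyPol hν hρ hleνρ hφ'
    have hD : ∀ ξ : Polynomial K, ξ.Monic → μ ξ < ρ ξ → φ.natDegree ≤ ξ.natDegree := by
      intro ξ hm hl
      by_contra hc; push_neg at hc
      have hμν : μ ξ = ν ξ := stepA hμ hν hle hφ hc
      have hνρξ : ν ξ < ρ ξ := by rw [← hμν]; exact hl
      have hd' : φ'.natDegree < φ.natDegree := lt_of_le_of_lt (hφ'.2.2 ξ hm hνρξ) hc
      have heqφ' : μ φ' = ν φ' := stepA hμ hν hle hφ hd'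
      exact no_small_nu_minimal hμ hν hle hφ hφ'key.1 hφ'key.2.1.1 hd'.le hφ'key.2.1.2 heqφ'
    have hφρ : φ ∈ TangentDir μ ρ := ⟨hφ.1, lt_of_lt_of_le hφ.2.1 (hleνρ φ), hD⟩
    constructor
    · ext ξ
      constructor
      · rintro ⟨hm, hl, hminρ⟩
        have hdle : ξ.natDegree ≤ φ.natDegree := hminρ φ hφ.1 hφρ.2.1
        have hμν : μ ξ < ν ξ := by
          rcases eq_or_lt_of_le (hle ξ) with h | h
          · exfalso
            have hνρξ : ν ξ < ρ ξ := by rw [← h]; exact hl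
            have hξt : ξ ∈ TangentDir ν ρ :=
              ⟨hm, hνρξ, fun χ hχm hχl =>
                le_trans hdle (hD χ hχm (lt_of_le_of_lt (hle χ) hχl))⟩
            have hξkey : IsKeyPol ν ξ := isKeyPol hν hρ hleνρ hξt
            exact no_small_nu_minimal hμ hν hle hφ hm hξkey.2.1.1 hdle hξkey.2.1.2 h
          · exact h
        exact ⟨hm, hμν, fun χ hχm hχl => le_trans hdle (hφ.2.2 χ hχm hχl)⟩
      · rintro ⟨hm, hl, hminν⟩
        exact ⟨hm, lt_of_lt_of_le hl (hleνρ ξ),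
          fun χ hχm hχl => le_trans (hminν φ hφ.1 hφ.2.1) (hD χ hχm hχl)⟩
    · intro f
      rw [eq_iff_not_dvd hμ hρ hleμρ hφρ f, eq_iff_not_dvd hμ hν hle hφ f]
end

section
/- Let μ be an inner node of T, φ ∈ KP(μ), and γ ∈ Λ∪{∞} with γ > μ(φ). Let ν = [μ; φ, γ] be the augmented valuation. Then: (1) ν is a valuation belonging to T, μ < ν, ν(φ) = γ, and t(μ,ν) = [φ]_μ. (2) The value group Γ_ν is the subgroup of Λ generated by Γ_{μ,φ} = {μ(a) : a ∈ K[x], 0 ≤ deg(a) < deg(φ)} together with γ. (3) If γ = ∞, then ν(f) = ∞ if and only if φ divides f in K[x]; if γ < ∞, then φ is a key polynomial for ν of minimal degree, so deg(ν) = deg(φ). -/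
open Polynomial

namespace MLV

section Aux

open Polynomial Finset

variable {K : Type*} [Field K] {Λ : Type*} [AddCommGroup Λ] [LinearOrder Λ] [IsOrderedAddMonoid Λ]

theorem aux_smul_top {s : ℕ} (hs : s ≠ 0) : s • (⊤ : WithTop Λ) = ⊤ := by
  cases s with
  | zero => exact absurd rfl hs
  | succ n => rw [succ_nsmul]; simp

theorem aux_coe_smul (s : ℕ) (c : Λ) : s • (c : WithTop Λ) = ((s • c : Λ) : WithTop Λ) :=
  (WithTop.coe_nsmul c s).symm

/-- Abstract axioms of a valuation on `K[x]`. -/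
structure ValAx (μ : Polynomial K → WithTop Λ) : Prop where
  one : μ 1 = 0
  zero' : μ 0 = ⊤
  mul : ∀ f g, μ (f * g) = μ f + μ g
  add : ∀ f g, min (μ f) (μ g) ≤ μ (f + g)

namespace ValAx

theorem ofIsValT {v : FieldVal K Λ} {μ : Polynomial K → WithTop Λ} (hμ : IsValT v μ) :
    ValAx μ := ⟨hμ.1, hμ.2.1, hμ.2.2.1, hμ.2.2.2.1⟩

variable {μ : Polynomial K → WithTop Λ} (h : ValAx μ)

include h

theorem neg_one : μ (-1) = 0 := by
  have h2 : μ ((-1 : Polynomial K) * (-1)) = μ (-1) + μ (-1) := h.mul _ _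
  rw [neg_one_mul, neg_neg, h.one] at h2
  rcases (eq_or_ne (μ (-1)) ⊤) with ht | ht
  · rw [ht] at h2; simp at h2
  · lift μ (-1) to Λ using ht with a ha
    have hz : a + a = 0 := by exact_mod_cast h2.symm
    have : a = 0 := by
      rcases lt_trichotomy a 0 with hlt | he | hgt
      · have h4 := add_lt_add hlt hlt
        rw [hz] at h4; simp at h4
      · exact he
      · have h4 := add_lt_add hgt hgt
        rw [hz] at h4; simp at h4
    simp [this]

theorem neg (f : Polynomial K) : μ (-f) = μ f := by
  have : μ (-f) = μ (-1) + μ f := by rw [← h.mul, neg_one_mul]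
  rw [this, h.neg_one, zero_add]

theorem sub_ge (f g : Polynomial K) : min (μ f) (μ g) ≤ μ (f - g) := by
  rw [sub_eq_add_neg]
  refine le_trans ?_ (h.add f (-g))
  rw [h.neg]

/-- dominance: adding something of bigger value does not change the value. -/
theorem dom {f g : Polynomial K} (hfg : μ f < μ g) : μ (f + g) = μ f := by
  refine le_antisymm ?_ (le_trans (by simp [le_of_lt hfg]) (h.add f g))
  by_contra hc
  push_neg at hc
  have h2 : μ f = μ (f + g - g) := by ring_nf
  have h3 : min (μ (f + g)) (μ g) ≤ μ (f + g - g) := h.sub_ge _ _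
  rw [← h2] at h3
  exact absurd h3 (not_le.mpr (lt_min hc hfg))

theorem dom_sub {f g : Polynomial K} (hfg : μ f < μ g) : μ (f - g) = μ f := by
  rw [sub_eq_add_neg]; exact h.dom (by rwa [h.neg])

theorem add_eq_min {f g : Polynomial K} (hfg : μ f ≠ μ g) : μ (f + g) = min (μ f) (μ g) := by
  rcases lt_or_gt_of_ne hfg with hlt | hgt
  · rw [h.dom hlt, min_eq_left (le_of_lt hlt)]
  · rw [add_comm, h.dom hgt, min_eq_right (le_of_lt hgt)]

theorem sum_ge {ι : Type*} (S : Finset ι) (x : ι → Polynomial K) {b : WithTop Λ}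
    (hb : ∀ i ∈ S, b ≤ μ (x i)) : b ≤ μ (∑ i ∈ S, x i) := by
  classical
  induction S using Finset.induction_on with
  | empty => simp [h.zero']
  | @insert a S ha ih =>
    rw [Finset.sum_insert ha]
    refine le_trans (le_min (hb a (Finset.mem_insert_self a S))
      (ih fun i hi => hb i (Finset.mem_insert_of_mem hi))) (h.add _ _)

theorem sum_gt {ι : Type*} (S : Finset ι) (x : ι → Polynomial K) {b : WithTop Λ}
    (hbtop : b ≠ ⊤) (hb : ∀ i ∈ S, b < μ (x i)) : b < μ (∑ i ∈ S, x i) := by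
  classical
  induction S using Finset.induction_on with
  | empty => simp [h.zero']; exact lt_top_iff_ne_top.mpr hbtop
  | @insert a S ha ih =>
    rw [Finset.sum_insert ha]
    exact lt_of_lt_of_le (lt_min (hb a (Finset.mem_insert_self a S))
      (ih fun i hi => hb i (Finset.mem_insert_of_mem hi))) (h.add _ _)

theorem dom_sum {ι : Type*} (S : Finset ι) (x : ι → Polynomial K) {f : Polynomial K}
    (hf : μ f ≠ ⊤) (hb : ∀ i ∈ S, μ f < μ (x i)) : μ (f + ∑ i ∈ S, x i) = μ f :=
  h.dom (h.sum_gt S x hf hb)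

theorem pow (f : Polynomial K) (n : ℕ) : μ (f ^ n) = n • μ f := by
  induction n with
  | zero => simpa using h.one
  | succ n ih => rw [pow_succ, h.mul, ih, succ_nsmul]

end ValAx

section Expansion

variable {ψ : Polynomial K} (hm : ψ.Monic)
include hm

theorem expCoeff_zero (f : Polynomial K) : expCoeff ψ f 0 = f %ₘ ψ := by
  simp [expCoeff]

theorem expCoeff_zero_poly (s : ℕ) : expCoeff ψ (0 : Polynomial K) s = 0 := by
  simp [expCoeff]

theorem degree_expCoeff_lt (f : Polynomial K) (s : ℕ) :
    degree (expCoeff ψ f s) < degree ψ :=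
  degree_modByMonic_lt _ hm

theorem aux_degree_psi_ne_bot : degree ψ ≠ ⊥ := by
  simp [degree_eq_bot, hm.ne_zero]

theorem divByMonic_pow_succ (f : Polynomial K) (s : ℕ) :
    f /ₘ ψ ^ (s + 1) = (f /ₘ ψ) /ₘ ψ ^ s := by
  have h1 := modByMonic_add_div f ψ
  have h2 := modByMonic_add_div (f /ₘ ψ) (ψ ^ s)
  refine (div_modByMonic_unique ((f /ₘ ψ) /ₘ ψ ^ s)
    (f %ₘ ψ + ψ * ((f /ₘ ψ) %ₘ ψ ^ s)) (hm.pow (s+1)) ⟨by linear_combination h1 + ψ * h2, ?_⟩).1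
  have d1 : degree (f %ₘ ψ) < degree ψ := degree_modByMonic_lt f hm
  have hψle : degree ψ ≤ degree (ψ ^ (s+1)) :=
    degree_le_of_dvd (dvd_pow_self ψ (Nat.succ_ne_zero s)) (pow_ne_zero _ hm.ne_zero)
  refine lt_of_le_of_lt (degree_add_le _ _) (max_lt (lt_of_lt_of_le d1 hψle) ?_)
  rcases eq_or_ne ((f /ₘ ψ) %ₘ ψ ^ s) 0 with h0 | h0
  · rw [h0, mul_zero, degree_zero]
    exact bot_lt_iff_ne_bot.mpr fun hb => (pow_ne_zero (s+1) hm.ne_zero) (degree_eq_bot.mp hb)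
  · rw [degree_mul]
    calc degree ψ + degree ((f /ₘ ψ) %ₘ ψ ^ s)
        < degree ψ + degree (ψ ^ s) :=
          WithBot.add_lt_add_left (aux_degree_psi_ne_bot hm) (degree_modByMonic_lt _ (hm.pow s))
      _ = degree (ψ ^ (s+1)) := by rw [pow_succ, degree_mul, add_comm]

theorem expCoeff_succ (f : Polynomial K) (s : ℕ) :
    expCoeff ψ f (s + 1) = expCoeff ψ (f /ₘ ψ) s := by
  rw [expCoeff, expCoeff, divByMonic_pow_succ hm]

theorem aux_add_divByMonic {q : Polynomial K} (hq : q.Monic) (f g : Polynomial K) :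
    (f + g) /ₘ q = f /ₘ q + g /ₘ q := by
  refine (div_modByMonic_unique (f /ₘ q + g /ₘ q) (f %ₘ q + g %ₘ q) hq
    ⟨by linear_combination (modByMonic_add_div f q) + (modByMonic_add_div g q), ?_⟩).1
  exact lt_of_le_of_lt (degree_add_le _ _)
    (max_lt (degree_modByMonic_lt _ hq) (degree_modByMonic_lt _ hq))

theorem expCoeff_add (f g : Polynomial K) (s : ℕ) :
    expCoeff ψ (f + g) s = expCoeff ψ f s + expCoeff ψ g s := by
  rw [expCoeff, expCoeff, expCoeff, aux_add_divByMonic hm (hm.pow s), add_modByMonic]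

theorem expCoeff_sum {ι : Type*} (S : Finset ι) (x : ι → Polynomial K) (s : ℕ) :
    expCoeff ψ (∑ i ∈ S, x i) s = ∑ i ∈ S, expCoeff ψ (x i) s := by
  classical
  induction S using Finset.induction_on with
  | empty => simp [expCoeff_zero_poly hm]
  | @insert a S ha ih =>
    rw [Finset.sum_insert ha, Finset.sum_insert ha, expCoeff_add hm, ih]

variable (hd : 0 < ψ.natDegree)
include hd

theorem expCoeff_eq_zero_of_lt {f : Polynomial K} {s : ℕ} (hs : f.natDegree < s) :
    expCoeff ψ f s = 0 := by
  rcases eq_or_ne f 0 with rfl | hf0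
  · exact expCoeff_zero_poly hm s
  rw [expCoeff, (divByMonic_eq_zero_iff (hm.pow s)).mpr ?_, zero_modByMonic]
  calc degree f ≤ (f.natDegree : WithBot ℕ) := degree_le_natDegree
    _ < ((ψ ^ s).natDegree : WithBot ℕ) := by
        rw [natDegree_pow]
        exact_mod_cast lt_of_lt_of_le hs (Nat.le_mul_of_pos_right s hd)
    _ = degree (ψ ^ s) := (degree_eq_natDegree (pow_ne_zero s hm.ne_zero)).symm

theorem sum_expCoeff :
    ∀ (N : ℕ) (f : Polynomial K), f.natDegree ≤ N →
      ∑ s ∈ Finset.range (N + 1), expCoeff ψ f s * ψ ^ s = f := by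
  intro N
  induction N with
  | zero =>
    intro f hf
    have hlt : degree f < degree ψ := by
      calc degree f ≤ (f.natDegree : WithBot ℕ) := degree_le_natDegree
        _ < (ψ.natDegree : WithBot ℕ) := by exact_mod_cast lt_of_le_of_lt hf hd
        _ = degree ψ := (degree_eq_natDegree hm.ne_zero).symm
    simp [expCoeff_zero hm, (modByMonic_eq_self_iff hm).mpr hlt]
  | succ N ih =>
    intro f hf
    have hdf : (f /ₘ ψ).natDegree ≤ N := by
      rw [natDegree_divByMonic f hm]; omega
    calc ∑ s ∈ Finset.range (N + 2), expCoeff ψ f s * ψ ^ s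
        = (∑ s ∈ Finset.range (N + 1), expCoeff ψ f (s + 1) * ψ ^ (s + 1))
            + expCoeff ψ f 0 * ψ ^ 0 := Finset.sum_range_succ' _ _
      _ = (∑ s ∈ Finset.range (N + 1), expCoeff ψ (f /ₘ ψ) s * ψ ^ s) * ψ + f %ₘ ψ := by
          rw [Finset.sum_mul, expCoeff_zero hm, pow_zero, mul_one]
          congr 1
          refine Finset.sum_congr rfl fun s _ => ?_
          rw [expCoeff_succ hm, pow_succ, mul_assoc]
      _ = f := by rw [ih _ hdf]; linear_combination modByMonic_add_div f ψ

theorem expCoeff_of_sum :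
    ∀ (N : ℕ) (b : ℕ → Polynomial K), (∀ t, degree (b t) < degree ψ) →
      ∀ s, expCoeff ψ (∑ t ∈ Finset.range (N + 1), b t * ψ ^ t) s
        = if s ≤ N then b s else 0 := by
  intro N
  induction N with
  | zero =>
    intro b hb s
    have h0 : ∑ t ∈ Finset.range 1, b t * ψ ^ t = b 0 := by simp
    rw [h0]
    cases s with
    | zero => simp [expCoeff_zero hm, (modByMonic_eq_self_iff hm).mpr (hb 0)]
    | succ σ =>
      rw [expCoeff_succ hm, (divByMonic_eq_zero_iff hm).mpr (hb 0), expCoeff_zero_poly hm]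
      simp
  | succ N ih =>
    intro b hb s
    set g : Polynomial K := ∑ t ∈ Finset.range (N + 1), b (t + 1) * ψ ^ t with hg
    have hsplit : b 0 + ψ * g = ∑ t ∈ Finset.range (N + 2), b t * ψ ^ t := by
      rw [Finset.sum_range_succ' (fun t => b t * ψ ^ t) (N + 1)]
      rw [hg, Finset.mul_sum]
      rw [pow_zero, mul_one, add_comm]
      congr 1
      refine Finset.sum_congr rfl fun t _ => ?_
      rw [pow_succ]; ring
    have hdm := div_modByMonic_unique g (b 0) hm ⟨hsplit, hb 0⟩
    cases s with
    | zero =>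
      rw [expCoeff_zero hm, hdm.2]
      simp
    | succ σ =>
      rw [expCoeff_succ hm, hdm.1, ih (fun t => b (t + 1)) (fun t => hb (t + 1)) σ]
      by_cases hσ : σ ≤ N <;> simp [hσ, Nat.succ_le_succ_iff]

end Expansion

section AugValGeneric

variable {μ : Polynomial K → WithTop Λ} {ψ : Polynomial K} {γ : WithTop Λ}

theorem augVal_le_term (f : Polynomial K) {s : ℕ} (hs : s ≤ f.natDegree) :
    augVal μ ψ γ f ≤ μ (expCoeff ψ f s) + s • γ :=
  Finset.inf'_le _ (Finset.mem_range.mpr (by omega))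

theorem le_augVal (f : Polynomial K) {b : WithTop Λ}
    (hb : ∀ s ≤ f.natDegree, b ≤ μ (expCoeff ψ f s) + s • γ) : b ≤ augVal μ ψ γ f :=
  Finset.le_inf' _ _ fun s hs => hb s (by have := Finset.mem_range.mp hs; omega)

theorem exists_augVal (f : Polynomial K) :
    ∃ s ≤ f.natDegree, augVal μ ψ γ f = μ (expCoeff ψ f s) + s • γ := by
  obtain ⟨s, hs, he⟩ := Finset.exists_mem_eq_inf'
    (Finset.nonempty_range_iff.mpr (Nat.succ_ne_zero f.natDegree))
    (fun s => μ (expCoeff ψ f s) + s • γ)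
  exact ⟨s, by have := Finset.mem_range.mp hs; omega, he⟩

theorem augVal_le_zeroth (hm : ψ.Monic) (f : Polynomial K) :
    augVal μ ψ γ f ≤ μ (f %ₘ ψ) := by
  have := augVal_le_term (μ := μ) (ψ := ψ) (γ := γ) f (Nat.zero_le f.natDegree)
  rwa [expCoeff_zero hm, zero_nsmul, add_zero] at this

theorem augVal_zero (h0 : μ 0 = ⊤) : augVal μ ψ γ (0 : Polynomial K) = ⊤ := by
  refine le_antisymm le_top (le_augVal _ fun s hs => ?_)
  simp only [expCoeff, zero_divByMonic, zero_modByMonic, h0, top_add, le_refl]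

theorem augVal_eq_inf (h0 : μ 0 = ⊤) (hm : ψ.Monic) (hd : 0 < ψ.natDegree)
    (f : Polynomial K) (N : ℕ) (hN : f.natDegree ≤ N) :
    augVal μ ψ γ f = (Finset.range (N + 1)).inf'
      (Finset.nonempty_range_iff.mpr (Nat.succ_ne_zero N))
      (fun s => μ (expCoeff ψ f s) + s • γ) := by
  apply le_antisymm
  · refine Finset.le_inf' _ _ fun s hs => ?_
    rcases le_or_gt s f.natDegree with h | h
    · exact augVal_le_term f h
    · rw [expCoeff_eq_zero_of_lt hm hd h, h0, top_add]
      exact le_top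
  · refine le_augVal f fun s hs => Finset.inf'_le _ (Finset.mem_range.mpr (by omega))

theorem aux_inf'_range_succ {α : Type*} [LinearOrder α] (N : ℕ) (F : ℕ → α) :
    (Finset.range (N + 2)).inf' (Finset.nonempty_range_iff.mpr (Nat.succ_ne_zero _)) F
      = min (F 0) ((Finset.range (N + 1)).inf'
          (Finset.nonempty_range_iff.mpr (Nat.succ_ne_zero _)) (fun s => F (s + 1))) := by
  apply le_antisymm
  · refine le_min (Finset.inf'_le _ (by simp)) (Finset.le_inf' _ _ fun s hs => ?_)
    exact Finset.inf'_le _ (Finset.mem_range.mpr (by have := Finset.mem_range.mp hs; omega))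
  · refine Finset.le_inf' _ _ fun s hs => ?_
    cases s with
    | zero => exact min_le_left _ _
    | succ t =>
      refine le_trans (min_le_right _ _) (Finset.inf'_le _ (Finset.mem_range.mpr ?_))
      have := Finset.mem_range.mp hs; omega

theorem aux_add_inf' (c : WithTop Λ) (S : Finset ℕ) (hS : S.Nonempty) (F : ℕ → WithTop Λ) :
    c + S.inf' hS F = S.inf' hS fun s => c + F s := by
  apply le_antisymm
  · exact Finset.le_inf' _ _ fun s hs => add_le_add_right (Finset.inf'_le _ hs) c
  · obtain ⟨s0, hs0, he⟩ := Finset.exists_mem_eq_inf' hS F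
    rw [he]
    exact Finset.inf'_le _ hs0

theorem val_add_small (h : ValAx μ)
    (hmin : ∀ f : Polynomial K, f ≠ 0 → degree f < degree ψ → ¬ MuDvd μ ψ f)
    {a0 : Polynomial K} (g : Polynomial K) (ha0 : degree a0 < degree ψ) :
    μ (a0 + ψ * g) = min (μ a0) (μ (ψ * g)) := by
  rcases lt_trichotomy (μ a0) (μ (ψ * g)) with hlt | heq | hgt
  · rw [h.dom hlt, min_eq_left hlt.le]
  · rw [min_eq_left heq.le]
    refine le_antisymm ?_ (by refine le_trans ?_ (h.add a0 (ψ * g)); rw [min_eq_left heq.le])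
    by_contra hc
    push_neg at hc
    rcases eq_or_ne a0 0 with rfl | ha0ne
    · rw [h.zero'] at hc; exact absurd hc not_top_lt
    refine hmin a0 ha0ne ha0 ⟨-g, ?_⟩
    show μ a0 < μ (a0 - -g * ψ)
    have he : a0 - -g * ψ = a0 + ψ * g := by ring
    rwa [he]
  · rw [add_comm, h.dom hgt, min_eq_right hgt.le]

theorem val_eq_augVal (h : ValAx μ) (hm : ψ.Monic) (hd : 0 < ψ.natDegree)
    (hmin : ∀ f : Polynomial K, f ≠ 0 → degree f < degree ψ → ¬ MuDvd μ ψ f)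
    (f : Polynomial K) : μ f = augVal μ ψ (μ ψ) f := by
  suffices H : ∀ (N : ℕ) (f : Polynomial K), f.natDegree ≤ N →
      μ f = (Finset.range (N + 1)).inf'
        (Finset.nonempty_range_iff.mpr (Nat.succ_ne_zero N))
        (fun s => μ (expCoeff ψ f s) + s • μ ψ) by
    exact H f.natDegree f le_rfl
  intro N
  induction N with
  | zero =>
    intro f hf
    have hlt : degree f < degree ψ := by
      calc degree f ≤ (f.natDegree : WithBot ℕ) := degree_le_natDegree
        _ < (ψ.natDegree : WithBot ℕ) := by exact_mod_cast lt_of_le_of_lt hf hd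
        _ = degree ψ := (degree_eq_natDegree hm.ne_zero).symm
    have h1 : expCoeff ψ f 0 = f := by
      rw [expCoeff_zero hm, (modByMonic_eq_self_iff hm).mpr hlt]
    simp [h1]
  | succ N ih =>
    intro f hf
    have hdf : (f /ₘ ψ).natDegree ≤ N := by
      rw [natDegree_divByMonic f hm]; omega
    have hkey := val_add_small h hmin (f /ₘ ψ) (degree_modByMonic_lt f hm)
    rw [modByMonic_add_div f ψ] at hkey
    rw [hkey, h.mul, ih (f /ₘ ψ) hdf, aux_add_inf', aux_inf'_range_succ]
    congr 1
    · rw [expCoeff_zero hm, zero_nsmul, add_zero]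
    · refine Finset.inf'_congr _ rfl fun s hs => ?_
      rw [expCoeff_succ hm, succ_nsmul]
      have : ∀ a b c : WithTop Λ, c + (a + b) = a + (b + c) := fun a b c => by
        rw [add_comm c, add_assoc]
      exact this _ _ _

end AugValGeneric

section KeyFacts

variable {μ : Polynomial K → WithTop Λ} {φ : Polynomial K}
  (h : ValAx μ) (hφ : IsKeyPol μ φ)
include h hφ

theorem key_degree_pos : (0 : WithBot ℕ) < degree φ :=
  natDegree_pos_iff_degree_pos.mp hφ.2.1.1

theorem key_not_dvd_one : ¬ MuDvd μ φ 1 :=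
  hφ.2.1.2 1 one_ne_zero (by rw [degree_one]; exact key_degree_pos h hφ)

theorem key_irreducible : Irreducible φ := by
  constructor
  · intro hu
    rw [Polynomial.isUnit_iff_degree_eq_zero] at hu
    exact absurd (key_degree_pos h hφ) (by rw [hu]; exact lt_irrefl 0)
  · intro a b hab
    by_contra hcon
    push_neg at hcon
    obtain ⟨hua, hub⟩ := hcon
    have hφ0 : φ ≠ 0 := hφ.1.ne_zero
    have ha0 : a ≠ 0 := fun h' => hφ0 (by rw [hab, h', zero_mul])
    have hb0 : b ≠ 0 := fun h' => hφ0 (by rw [hab, h', mul_zero])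
    have hna : 0 < a.natDegree := by
      rcases Nat.eq_zero_or_pos a.natDegree with h' | h'
      · exact absurd (Polynomial.isUnit_iff_degree_eq_zero.mpr
          (by rw [degree_eq_natDegree ha0, h']; rfl)) hua
      · exact h'
    have hnb : 0 < b.natDegree := by
      rcases Nat.eq_zero_or_pos b.natDegree with h' | h'
      · exact absurd (Polynomial.isUnit_iff_degree_eq_zero.mpr
          (by rw [degree_eq_natDegree hb0, h']; rfl)) hub
      · exact h'
    have hsum : φ.natDegree = a.natDegree + b.natDegree := by
      rw [hab, natDegree_mul ha0 hb0]
    have hda : degree a < degree φ := by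
      rw [degree_eq_natDegree ha0, degree_eq_natDegree hφ0]
      exact_mod_cast (by omega : a.natDegree < φ.natDegree)
    have hdb : degree b < degree φ := by
      rw [degree_eq_natDegree hb0, degree_eq_natDegree hφ0]
      exact_mod_cast (by omega : b.natDegree < φ.natDegree)
    have hdvd : MuDvd μ φ (a * b) := ⟨1, by
      show μ (a * b) < μ (a * b - 1 * φ)
      rw [one_mul, ← hab, sub_self, h.zero']
      exact lt_top_iff_ne_top.mpr hφ.2.2.1⟩
    rcases hφ.2.2.2.2 a b hdvd with hd | hd
    · exact hφ.2.1.2 a ha0 hda hd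
    · exact hφ.2.1.2 b hb0 hdb hd
  
theorem mu_ne_top : ∀ f : Polynomial K, f ≠ 0 → μ f ≠ ⊤ := by
  suffices H : ∀ (n : ℕ) (f : Polynomial K), f.natDegree ≤ n → f ≠ 0 → μ f ≠ ⊤ by
    exact fun f hf => H f.natDegree f le_rfl hf
  intro n
  induction n using Nat.strong_induction_on with
  | _ n ih =>
    intro f hfn hf0 htop
    by_cases hdvd : φ ∣ f
    · obtain ⟨g, rfl⟩ := hdvd
      have hg0 : g ≠ 0 := fun h' => hf0 (by rw [h', mul_zero])
      have hsum : μ φ + μ g = ⊤ := by rw [← h.mul]; exact htop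
      have hgtop : μ g = ⊤ := by
        rcases WithTop.add_eq_top.mp hsum with h' | h'
        · exact absurd h' hφ.2.2.1
        · exact h'
      have hdeg : (φ * g).natDegree = φ.natDegree + g.natDegree :=
        natDegree_mul hφ.1.ne_zero hg0
      have h1 : 0 < φ.natDegree := hφ.2.1.1
      exact ih g.natDegree (by omega) g le_rfl hg0 hgtop
    · have hcop : IsCoprime φ f := ((key_irreducible h hφ).coprime_iff_not_dvd).mpr hdvd
      obtain ⟨u, w, huw⟩ := hcop
      refine key_not_dvd_one h hφ ⟨u, ?_⟩
      show μ 1 < μ (1 - u * φ)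
      have he : (1 : Polynomial K) - u * φ = w * f := by linear_combination -huw
      rw [he, h.mul, htop, add_top, h.one]
      exact lt_top_iff_ne_top.mpr WithTop.zero_ne_top

theorem prod_small_aux {a b : Polynomial K} (ha0 : a ≠ 0) (hb0 : b ≠ 0)
    (ha : degree a < degree φ) (hb : degree b < degree φ) :
    μ ((a * b) %ₘ φ) = μ a + μ b ∧ μ a + μ b ≤ μ φ + μ ((a * b) /ₘ φ) := by
  have hab : μ (a * b) = μ a + μ b := h.mul a b
  have habne : μ (a * b) ≠ ⊤ := by
    rw [hab]
    exact WithTop.add_ne_top.mpr ⟨mu_ne_top h hφ a ha0, mu_ne_top h hφ b hb0⟩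
  have hmd : (a * b) %ₘ φ + φ * ((a * b) /ₘ φ) = a * b := modByMonic_add_div _ φ
  set r := (a * b) %ₘ φ with hr
  set q := (a * b) /ₘ φ with hq
  rcases lt_trichotomy (μ (φ * q)) (μ (a * b)) with hlt | heq | hgt
  · exfalso
    have hrv : μ r = μ (φ * q) := by
      have he : r = -(φ * q) + (a * b) := by linear_combination hmd
      rw [he, h.dom (by rwa [h.neg]), h.neg]
    have hrne : r ≠ 0 := by
      intro h0
      rw [h0, h.zero'] at hrv
      exact not_top_lt (hrv ▸ hlt)
    refine hφ.2.1.2 r hrne (degree_modByMonic_lt _ hφ.1) ⟨-q, ?_⟩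
    show μ r < μ (r - -q * φ)
    have he : r - -q * φ = a * b := by linear_combination hmd
    rw [he, hrv]
    exact hlt
  · constructor
    · have hge : μ (a * b) ≤ μ r := by
        have he : r = a * b - φ * q := by linear_combination hmd
        rw [he]
        refine le_trans ?_ (h.sub_ge _ _)
        rw [← heq, min_self]
      rcases eq_or_lt_of_le hge with he | hlt2
      · rw [← he, hab]
      · exfalso
        have hdvd : MuDvd μ φ (a * b) := by
          refine ⟨q, ?_⟩
          show μ (a * b) < μ (a * b - q * φ)
          have he : a * b - q * φ = r := by linear_combination -hmd
          rwa [he]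
        rcases hφ.2.2.2.2 a b hdvd with hda | hdb
        · exact hφ.2.1.2 a ha0 ha hda
        · exact hφ.2.1.2 b hb0 hb hdb
    · rw [← hab, ← h.mul]; exact heq.ge
  · constructor
    · have he : r = a * b - φ * q := by linear_combination hmd
      rw [he, h.dom_sub hgt, hab]
    · rw [← hab, ← h.mul]; exact hgt.le

theorem prod_small_mod {a b : Polynomial K}
    (ha : degree a < degree φ) (hb : degree b < degree φ) :
    μ ((a * b) %ₘ φ) = μ a + μ b := by
  rcases eq_or_ne a 0 with rfl | ha0
  · simp [h.zero']
  rcases eq_or_ne b 0 with rfl | hb0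
  · simp [h.zero']
  exact (prod_small_aux h hφ ha0 hb0 ha hb).1

theorem prod_small_div {γ : WithTop Λ} (hγ : μ φ < γ) {a b : Polynomial K}
    (ha : degree a < degree φ) (hb : degree b < degree φ) (hab : μ a + μ b ≠ ⊤) :
    μ a + μ b < μ ((a * b) /ₘ φ) + γ := by
  have ha0 : a ≠ 0 := fun h' => hab (by rw [h', h.zero', top_add])
  have hb0 : b ≠ 0 := fun h' => hab (by rw [h', h.zero', add_top])
  rcases eq_or_ne ((a * b) /ₘ φ) 0 with hq0 | hq0
  · rw [hq0, h.zero', top_add]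
    exact lt_top_iff_ne_top.mpr hab
  · calc μ a + μ b ≤ μ φ + μ ((a * b) /ₘ φ) := (prod_small_aux h hφ ha0 hb0 ha hb).2
      _ = μ ((a * b) /ₘ φ) + μ φ := add_comm _ _
      _ < μ ((a * b) /ₘ φ) + γ :=
          WithTop.add_lt_add_left (mu_ne_top h hφ _ hq0) hγ

end KeyFacts

section MoreExpansion

variable {ψ : Polynomial K} (hm : ψ.Monic)
include hm

theorem degree_le_pow_succ (s : ℕ) : degree ψ ≤ degree (ψ ^ (s + 1)) :=
  degree_le_of_dvd (dvd_pow_self ψ (Nat.succ_ne_zero s)) (pow_ne_zero _ hm.ne_zero)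

theorem expCoeff_succ_eq_zero_of_degree_lt {f : Polynomial K} (hf : degree f < degree ψ)
    (s : ℕ) : expCoeff ψ f (s + 1) = 0 := by
  rw [expCoeff, (divByMonic_eq_zero_iff (hm.pow _)).mpr
    (lt_of_lt_of_le hf (degree_le_pow_succ hm s)), zero_modByMonic]

variable (hd : 0 < ψ.natDegree)
include hd

theorem degree_divByMonic_lt_of_lt_sq {c : Polynomial K} (hc : degree c < degree (ψ ^ 2)) :
    degree (c /ₘ ψ) < degree ψ := by
  rcases eq_or_ne (c /ₘ ψ) 0 with h0 | h0
  · rw [h0, degree_zero]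
    exact bot_lt_iff_ne_bot.mpr (aux_degree_psi_ne_bot hm)
  have hc0 : c ≠ 0 := fun h' => h0 (by rw [h', zero_divByMonic])
  have hnc : c.natDegree < 2 * ψ.natDegree := by
    have := hc
    rw [degree_eq_natDegree hc0, degree_eq_natDegree (pow_ne_zero 2 hm.ne_zero),
      natDegree_pow] at this
    exact_mod_cast this
  have hnd : (c /ₘ ψ).natDegree = c.natDegree - ψ.natDegree := natDegree_divByMonic c hm
  rw [degree_eq_natDegree h0, degree_eq_natDegree hm.ne_zero]
  exact_mod_cast (by omega : (c /ₘ ψ).natDegree < ψ.natDegree)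

theorem expCoeff_mul_pow {c : Polynomial K} (hc : degree c < degree (ψ ^ 2)) (w u : ℕ) :
    expCoeff ψ (c * ψ ^ w) u
      = if u = w then c %ₘ ψ else if u = w + 1 then c /ₘ ψ else 0 := by
  classical
  set b : ℕ → Polynomial K :=
    fun t => if t = w then c %ₘ ψ else if t = w + 1 then c /ₘ ψ else 0 with hbdef
  have hb : ∀ t, degree (b t) < degree ψ := by
    intro t
    rw [hbdef]
    dsimp only
    split_ifs
    · exact degree_modByMonic_lt _ hm
    · exact degree_divByMonic_lt_of_lt_sq hm hd hc
    · rw [degree_zero]; exact bot_lt_iff_ne_bot.mpr (aux_degree_psi_ne_bot hm)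
  have hbw : b w = c %ₘ ψ := by simp only [hbdef, if_pos rfl]
  have hbw1 : b (w + 1) = c /ₘ ψ := by
    simp only [hbdef, if_neg (by omega : ¬ w + 1 = w), if_true, eq_self_iff_true]
  have hsum : ∑ t ∈ Finset.range (w + 2), b t * ψ ^ t = c * ψ ^ w := by
    rw [Finset.sum_range_succ, Finset.sum_range_succ]
    have h0 : ∑ t ∈ Finset.range w, b t * ψ ^ t = 0 := by
      refine Finset.sum_eq_zero fun t ht => ?_
      have htw : t < w := Finset.mem_range.mp ht
      simp only [hbdef, if_neg (by omega : ¬ t = w), if_neg (by omega : ¬ t = w + 1), zero_mul]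
    rw [h0, zero_add, hbw, hbw1]
    linear_combination (ψ ^ w) * (modByMonic_add_div c ψ)
  rw [← hsum, expCoeff_of_sum hm hd (w + 1) b hb u]
  simp only [hbdef]
  split_ifs <;> first | rfl | omega

end MoreExpansion

theorem aux_nsmul_ne_top {γ : WithTop Λ} (hγ : γ ≠ ⊤) (k : ℕ) : k • γ ≠ ⊤ := by
  lift γ to Λ using hγ
  rw [aux_coe_smul]
  exact WithTop.coe_ne_top

theorem aux_rearrange (x y γ : WithTop Λ) (s t : ℕ) :
    (x + s • γ) + (y + t • γ) = (x + y) + (s + t) • γ := by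
  rw [add_nsmul]
  abel

theorem aux_rearrange2 (q γ : WithTop Λ) (k : ℕ) :
    (q + γ) + k • γ = q + (k + 1) • γ := by
  rw [succ_nsmul]
  abel

section AugSmall

variable {μ : Polynomial K → WithTop Λ} {φ : Polynomial K} {γ : WithTop Λ}
  (h : ValAx μ) (hφ : IsKeyPol μ φ)
include h hφ

theorem nu_small {f : Polynomial K} (hf : degree f < degree φ) :
    augVal μ φ γ f = μ f := by
  rcases eq_or_ne f 0 with rfl | hf0
  · rw [augVal_zero h.zero', h.zero']
  have he0 : expCoeff φ f 0 = f := by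
    rw [expCoeff_zero hφ.1, (modByMonic_eq_self_iff hφ.1).mpr hf]
  apply le_antisymm
  · have := augVal_le_term (μ := μ) (ψ := φ) (γ := γ) f (Nat.zero_le f.natDegree)
    rwa [he0, zero_nsmul, add_zero] at this
  · refine le_augVal f fun s hs => ?_
    cases s with
    | zero => rw [he0, zero_nsmul, add_zero]
    | succ t =>
      rw [expCoeff_succ_eq_zero_of_degree_lt hφ.1 hf t, h.zero', top_add]
      exact le_top

theorem nu_top_iff {f : Polynomial K} :
    augVal μ φ γ f = ⊤ ↔ f = 0 ∨ (γ = ⊤ ∧ φ ∣ f) := by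
  constructor
  · intro htop
    rcases eq_or_ne f 0 with rfl | hf0
    · exact Or.inl rfl
    refine Or.inr ⟨?_, ?_⟩
    · by_contra hγtop
      have hex : ∃ s, s ≤ f.natDegree ∧ expCoeff φ f s ≠ 0 := by
        by_contra hall
        push_neg at hall
        have := sum_expCoeff hφ.1 hφ.2.1.1 f.natDegree f le_rfl
        rw [Finset.sum_eq_zero (fun s hs => by
          rw [hall s (by have := Finset.mem_range.mp hs; omega), zero_mul])] at this
        exact hf0 this.symm
      obtain ⟨s, hs, hes⟩ := hex
      have hle := augVal_le_term (μ := μ) (ψ := φ) (γ := γ) f hs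
      rw [htop, top_le_iff] at hle
      rcases WithTop.add_eq_top.mp hle with h' | h'
      · exact mu_ne_top h hφ _ hes h'
      · exact aux_nsmul_ne_top hγtop s h'
    · have hle := augVal_le_zeroth (μ := μ) (γ := γ) hφ.1 f
      rw [htop, top_le_iff] at hle
      have : f %ₘ φ = 0 := by
        by_contra hne
        exact mu_ne_top h hφ _ hne hle
      exact (modByMonic_eq_zero_iff_dvd hφ.1).mp this
  · rintro (rfl | ⟨rfl, hdvd⟩)
    · exact augVal_zero h.zero'
    · refine top_le_iff.mp (le_augVal f fun s hs => ?_)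
      cases s with
      | zero =>
        rw [expCoeff_zero hφ.1, (modByMonic_eq_zero_iff_dvd hφ.1).mpr hdvd, h.zero', top_add]
      | succ t =>
        rw [aux_smul_top (Nat.succ_ne_zero t), add_top]

theorem augVal_monic_same_deg {ψ : Polynomial K} (hψm : ψ.Monic)
    (hdeq : ψ.natDegree = φ.natDegree) (γ' : WithTop Λ) :
    augVal μ φ γ' ψ = min (μ (ψ - φ)) γ' := by
  have hφ0 : φ ≠ 0 := hφ.1.ne_zero
  have hψ0 : ψ ≠ 0 := hψm.ne_zero
  have hdeg : degree ψ = degree φ := by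
    rw [degree_eq_natDegree hψ0, degree_eq_natDegree hφ0, hdeq]
  have hsub : degree (ψ - φ) < degree φ := by
    rw [← hdeg]
    exact degree_sub_lt hdeg hψ0 (by rw [hψm.leadingCoeff, hφ.1.leadingCoeff])
  have hdm := div_modByMonic_unique 1 (ψ - φ) hφ.1 ⟨by ring, hsub⟩
  have he0 : expCoeff φ ψ 0 = ψ - φ := by rw [expCoeff_zero hφ.1, hdm.2]
  have he1 : expCoeff φ ψ 1 = 1 := by
    rw [← zero_add 1, expCoeff_succ hφ.1, hdm.1, expCoeff_zero hφ.1,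
      (modByMonic_eq_self_iff hφ.1).mpr (by rw [degree_one]; exact key_degree_pos h hφ)]
  have hd1 : 1 ≤ ψ.natDegree := by rw [hdeq]; exact hφ.2.1.1
  apply le_antisymm
  · refine le_min ?_ ?_
    · have := augVal_le_term (μ := μ) (ψ := φ) (γ := γ') ψ (Nat.zero_le ψ.natDegree)
      rwa [he0, zero_nsmul, add_zero] at this
    · have := augVal_le_term (μ := μ) (ψ := φ) (γ := γ') ψ hd1
      rwa [he1, h.one, zero_add, one_nsmul] at this
  · refine le_augVal ψ fun s hs => ?_
    match s with
    | 0 =>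
      rw [he0, zero_nsmul, add_zero]
      exact min_le_left _ _
    | 1 =>
      rw [he1, h.one, zero_add, one_nsmul]
      exact min_le_right _ _
    | (n+2) =>
      rw [← one_add_one_eq_two, ← add_assoc, expCoeff_succ hφ.1, hdm.1,
        expCoeff_succ_eq_zero_of_degree_lt hφ.1
          (by rw [degree_one]; exact key_degree_pos h hφ) n, h.zero', top_add]
      exact le_top

theorem nu_phi (hγ : μ φ < γ) : augVal μ φ γ φ = γ := by
  rw [augVal_monic_same_deg h hφ hφ.1 rfl γ, sub_self, h.zero']
  exact min_eq_right le_top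

end AugSmall

theorem degree_mul_lt_sq {ψ a b : Polynomial K} (hm : ψ.Monic)
    (ha : degree a < degree ψ) (hb : degree b < degree ψ) :
    degree (a * b) < degree (ψ ^ 2) := by
  rcases eq_or_ne (a * b) 0 with h0 | h0
  · rw [h0, degree_zero]
    exact bot_lt_iff_ne_bot.mpr fun hb' => (pow_ne_zero 2 hm.ne_zero) (degree_eq_bot.mp hb')
  have ha0 : a ≠ 0 := fun h' => h0 (by rw [h', zero_mul])
  have hb0 : b ≠ 0 := fun h' => h0 (by rw [h', mul_zero])
  rw [degree_mul, pow_two, degree_mul]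
  calc degree a + degree b < degree ψ + degree b :=
        WithBot.add_lt_add_right (by simp [degree_eq_bot, hb0]) ha
    _ < degree ψ + degree ψ :=
        WithBot.add_lt_add_left (by simp [degree_eq_bot, hm.ne_zero]) hb

section NuMul

variable {μ : Polynomial K → WithTop Λ} {φ : Polynomial K} {γ : WithTop Λ}
  (h : ValAx μ) (hφ : IsKeyPol μ φ) (hγ : μ φ < γ)
include h hφ hγ

theorem pair_term_ge {f g : Polynomial K} {s t : ℕ}
    (hsf : s ≤ f.natDegree) (htg : t ≤ g.natDegree) (u : ℕ) :
    augVal μ φ γ f + augVal μ φ γ g ≤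
      μ (expCoeff φ (expCoeff φ f s * expCoeff φ g t * φ ^ (s + t)) u) + u • γ := by
  have hda : degree (expCoeff φ f s) < degree φ := degree_expCoeff_lt hφ.1 f s
  have hdb : degree (expCoeff φ g t) < degree φ := degree_expCoeff_lt hφ.1 g t
  rw [expCoeff_mul_pow hφ.1 hφ.2.1.1 (degree_mul_lt_sq hφ.1 hda hdb) (s + t) u]
  split_ifs with h1 h2
  · rw [prod_small_mod h hφ hda hdb, h1, ← aux_rearrange]
    exact add_le_add (augVal_le_term f hsf) (augVal_le_term g htg)
  · rcases eq_or_ne (μ (expCoeff φ f s) + μ (expCoeff φ g t)) ⊤ with htop | hne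
    · have h0 : expCoeff φ f s * expCoeff φ g t = 0 := by
        rcases WithTop.add_eq_top.mp htop with h' | h'
        · rcases eq_or_ne (expCoeff φ f s) 0 with h0' | hne0
          · rw [h0', zero_mul]
          · exact absurd h' (mu_ne_top h hφ _ hne0)
        · rcases eq_or_ne (expCoeff φ g t) 0 with h0' | hne0
          · rw [h0', mul_zero]
          · exact absurd h' (mu_ne_top h hφ _ hne0)
      rw [h0, zero_divByMonic, h.zero', top_add]
      exact le_top
    · calc augVal μ φ γ f + augVal μ φ γ g
          ≤ (μ (expCoeff φ f s) + s • γ) + (μ (expCoeff φ g t) + t • γ) :=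
            add_le_add (augVal_le_term f hsf) (augVal_le_term g htg)
        _ = (μ (expCoeff φ f s) + μ (expCoeff φ g t)) + (s + t) • γ := aux_rearrange _ _ _ _ _
        _ ≤ (μ ((expCoeff φ f s * expCoeff φ g t) /ₘ φ) + γ) + (s + t) • γ :=
            add_le_add_left (le_of_lt (prod_small_div h hφ hγ hda hdb hne)) _
        _ = μ ((expCoeff φ f s * expCoeff φ g t) /ₘ φ) + (s + t + 1) • γ :=
            aux_rearrange2 _ _ _
        _ = _ := by rw [h2]
  · rw [h.zero', top_add]
    exact le_top

theorem nu_mul (f g : Polynomial K) :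
    augVal μ φ γ (f * g) = augVal μ φ γ f + augVal μ φ γ g := by
  classical
  rcases eq_or_ne (augVal μ φ γ f) ⊤ with hft | hft
  · rw [hft, top_add]
    rcases (nu_top_iff h hφ).mp hft with rfl | ⟨rfl, hdvd⟩
    · rw [zero_mul, augVal_zero h.zero']
    · exact (nu_top_iff h hφ).mpr (Or.inr ⟨rfl, hdvd.mul_right g⟩)
  rcases eq_or_ne (augVal μ φ γ g) ⊤ with hgt | hgt
  · rw [hgt, add_top]
    rcases (nu_top_iff h hφ).mp hgt with rfl | ⟨rfl, hdvd⟩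
    · rw [mul_zero, augVal_zero h.zero']
    · exact (nu_top_iff h hφ).mpr (Or.inr ⟨rfl, hdvd.mul_left f⟩)
  have hf0 : f ≠ 0 := fun h' => hft (by rw [h', augVal_zero h.zero'])
  have hg0 : g ≠ 0 := fun h' => hgt (by rw [h', augVal_zero h.zero'])
  have hfgne : augVal μ φ γ f + augVal μ φ γ g ≠ ⊤ := WithTop.add_ne_top.mpr ⟨hft, hgt⟩
  set Nf := f.natDegree with hNf
  set Ng := g.natDegree with hNg
  set P : Finset (ℕ × ℕ) := Finset.range (Nf + 1) ×ˢ Finset.range (Ng + 1) with hP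
  set T : ℕ × ℕ → Polynomial K :=
    fun p => expCoeff φ f p.1 * expCoeff φ g p.2 * φ ^ (p.1 + p.2) with hT
  have hmemP : ∀ {p : ℕ × ℕ}, p ∈ P → p.1 ≤ Nf ∧ p.2 ≤ Ng := by
    intro p hp
    rw [hP, Finset.mem_product, Finset.mem_range, Finset.mem_range] at hp
    omega
  have hfg : f * g = ∑ p ∈ P, T p := by
    conv_lhs => rw [← sum_expCoeff hφ.1 hφ.2.1.1 Nf f le_rfl,
      ← sum_expCoeff hφ.1 hφ.2.1.1 Ng g le_rfl]
    rw [Finset.sum_mul_sum, hP, Finset.sum_product]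
    refine Finset.sum_congr rfl fun i _ => Finset.sum_congr rfl fun j _ => ?_
    rw [hT]
    dsimp only
    rw [pow_add]
    ring
  have hTe : ∀ u, expCoeff φ (f * g) u = ∑ p ∈ P, expCoeff φ (T p) u := by
    intro u
    conv_lhs => rw [hfg]
    exact expCoeff_sum hφ.1 P T u
  -- lower bound
  have hge : augVal μ φ γ f + augVal μ φ γ g ≤ augVal μ φ γ (f * g) := by
    refine le_augVal _ fun u hu => ?_
    rw [hTe u]
    have hPne : P.Nonempty := ⟨(0, 0), by simp [hP]⟩
    obtain ⟨p1, hp1, hm1⟩ := Finset.exists_mem_eq_inf' hPne (fun p => μ (expCoeff φ (T p) u))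
    calc augVal μ φ γ f + augVal μ φ γ g
        ≤ μ (expCoeff φ (T p1) u) + u • γ :=
          pair_term_ge h hφ hγ (hmemP hp1).1 (hmemP hp1).2 u
      _ ≤ μ (∑ p ∈ P, expCoeff φ (T p) u) + u • γ := by
          refine add_le_add_left (h.sum_ge P _ fun p hp => ?_) _
          rw [← hm1]
          exact Finset.inf'_le _ hp
  -- minimal indices
  have hPf : ∃ s, augVal μ φ γ f = μ (expCoeff φ f s) + s • γ ∧ s ≤ Nf := by
    obtain ⟨s, h1, h2⟩ := exists_augVal (μ := μ) (ψ := φ) (γ := γ) f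
    exact ⟨s, h2, h1⟩
  have hPg : ∃ t, augVal μ φ γ g = μ (expCoeff φ g t) + t • γ ∧ t ≤ Ng := by
    obtain ⟨t, h1, h2⟩ := exists_augVal (μ := μ) (ψ := φ) (γ := γ) g
    exact ⟨t, h2, h1⟩
  set s0 := Nat.find hPf with hs0def
  set t0 := Nat.find hPg with ht0def
  obtain ⟨hs0eq, hs0le⟩ := Nat.find_spec hPf
  obtain ⟨ht0eq, ht0le⟩ := Nat.find_spec hPg
  have hs0min : ∀ s, s < s0 → s ≤ Nf →
      augVal μ φ γ f < μ (expCoeff φ f s) + s • γ := by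
    intro s hlt hle
    rcases (augVal_le_term (μ := μ) (ψ := φ) (γ := γ) f hle).lt_or_eq with h' | h'
    · exact h'
    · exact absurd ⟨h', hle⟩ (Nat.find_min hPf hlt)
  have ht0min : ∀ t, t < t0 → t ≤ Ng →
      augVal μ φ γ g < μ (expCoeff φ g t) + t • γ := by
    intro t hlt hle
    rcases (augVal_le_term (μ := μ) (ψ := φ) (γ := γ) g hle).lt_or_eq with h' | h'
    · exact h'
    · exact absurd ⟨h', hle⟩ (Nat.find_min hPg hlt)
  have hsmulf : ¬ (s0 : ℕ) • γ = ⊤ := by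
    intro h'
    exact hft (by rw [hs0eq, h', add_top])
  have hsmulg : ¬ (t0 : ℕ) • γ = ⊤ := by
    intro h'
    exact hgt (by rw [ht0eq, h', add_top])
  have hu0γ : (s0 + t0) • γ ≠ ⊤ := by
    rw [add_nsmul]
    exact WithTop.add_ne_top.mpr ⟨hsmulf, hsmulg⟩
  have hu0 : s0 + t0 ≤ (f * g).natDegree := by
    rw [natDegree_mul hf0 hg0]
    omega
  have hmem : (s0, t0) ∈ P := by
    rw [hP, Finset.mem_product]
    exact ⟨Finset.mem_range.mpr (by omega), Finset.mem_range.mpr (by omega)⟩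
  -- the dominant coefficient
  have hT0 : expCoeff φ (T (s0, t0)) (s0 + t0) = (expCoeff φ f s0 * expCoeff φ g t0) %ₘ φ := by
    rw [hT]
    dsimp only
    rw [expCoeff_mul_pow hφ.1 hφ.2.1.1 (degree_mul_lt_sq hφ.1
      (degree_expCoeff_lt hφ.1 f s0) (degree_expCoeff_lt hφ.1 g t0)) _ _, if_pos rfl]
  have hT0val : μ (expCoeff φ (T (s0, t0)) (s0 + t0)) + (s0 + t0) • γ
      = augVal μ φ γ f + augVal μ φ γ g := by
    rw [hT0, prod_small_mod h hφ (degree_expCoeff_lt hφ.1 f s0) (degree_expCoeff_lt hφ.1 g t0),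
      ← aux_rearrange, ← hs0eq, ← ht0eq]
  have hT0ne : μ (expCoeff φ (T (s0, t0)) (s0 + t0)) ≠ ⊤ := by
    intro h'
    exact hfgne (by rw [← hT0val, h', top_add])
  -- strict domination of all other pairs
  have hstrict : ∀ p ∈ P.erase (s0, t0),
      μ (expCoeff φ (T (s0, t0)) (s0 + t0)) < μ (expCoeff φ (T p) (s0 + t0)) := by
    rintro ⟨s, t⟩ hp
    have hpP : (s, t) ∈ P := Finset.mem_of_mem_erase hp
    have hpne : (s, t) ≠ (s0, t0) := Finset.ne_of_mem_erase hp
    have hs : s ≤ Nf := (hmemP hpP).1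
    have ht : t ≤ Ng := (hmemP hpP).2
    refine (WithTop.add_lt_add_iff_right hu0γ).mp ?_
    rw [hT0val]
    have hda : degree (expCoeff φ f s) < degree φ := degree_expCoeff_lt hφ.1 f s
    have hdb : degree (expCoeff φ g t) < degree φ := degree_expCoeff_lt hφ.1 g t
    have hTp : expCoeff φ (T (s, t)) (s0 + t0)
        = if s0 + t0 = s + t then (expCoeff φ f s * expCoeff φ g t) %ₘ φ
          else if s0 + t0 = s + t + 1 then (expCoeff φ f s * expCoeff φ g t) /ₘ φ else 0 := by
      rw [hT]
      dsimp only
      rw [expCoeff_mul_pow hφ.1 hφ.2.1.1 (degree_mul_lt_sq hφ.1 hda hdb) _ _]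
    rw [hTp]
    split_ifs with h1 h2
    · -- diagonal case
      rw [prod_small_mod h hφ hda hdb]
      rcases eq_or_ne (μ (expCoeff φ f s) + μ (expCoeff φ g t)) ⊤ with htop | hne
      · rw [htop, top_add]
        exact lt_top_iff_ne_top.mpr hfgne
      have hsne : s ≠ s0 := by
        intro hss
        exact hpne (by rw [hss]; congr 1; omega)
      rw [h1, ← aux_rearrange]
      rcases lt_or_gt_of_ne hsne with hlt | hgt2
      · exact WithTop.add_lt_add_of_lt_of_le hgt (hs0min s hlt hs) (augVal_le_term g ht)
      · have htlt : t < t0 := by omega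
        exact WithTop.add_lt_add_of_le_of_lt hft (augVal_le_term f hs) (ht0min t htlt ht)
    · -- division case
      rcases eq_or_ne (μ (expCoeff φ f s) + μ (expCoeff φ g t)) ⊤ with htop | hne
      · have h0 : expCoeff φ f s * expCoeff φ g t = 0 := by
          rcases WithTop.add_eq_top.mp htop with h' | h'
          · rcases eq_or_ne (expCoeff φ f s) 0 with h0' | hne0
            · rw [h0', zero_mul]
            · exact absurd h' (mu_ne_top h hφ _ hne0)
          · rcases eq_or_ne (expCoeff φ g t) 0 with h0' | hne0
            · rw [h0', mul_zero]
            · exact absurd h' (mu_ne_top h hφ _ hne0)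
        rw [h0, zero_divByMonic, h.zero', top_add]
        exact lt_top_iff_ne_top.mpr hfgne
      · have hstγ : (s + t) • γ ≠ ⊤ := by
          intro h'
          refine hu0γ ?_
          rw [h2, succ_nsmul, h', top_add]
        calc augVal μ φ γ f + augVal μ φ γ g
            ≤ (μ (expCoeff φ f s) + s • γ) + (μ (expCoeff φ g t) + t • γ) :=
              add_le_add (augVal_le_term f hs) (augVal_le_term g ht)
          _ = (μ (expCoeff φ f s) + μ (expCoeff φ g t)) + (s + t) • γ :=
              aux_rearrange _ _ _ _ _
          _ < (μ ((expCoeff φ f s * expCoeff φ g t) /ₘ φ) + γ) + (s + t) • γ :=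
              WithTop.add_lt_add_right hstγ (prod_small_div h hφ hγ hda hdb hne)
          _ = μ ((expCoeff φ f s * expCoeff φ g t) /ₘ φ) + (s + t + 1) • γ :=
              aux_rearrange2 _ _ _
          _ = _ := by rw [h2]
    · rw [h.zero', top_add]
      exact lt_top_iff_ne_top.mpr hfgne
  -- conclude
  have hEsplit : expCoeff φ (f * g) (s0 + t0)
      = expCoeff φ (T (s0, t0)) (s0 + t0)
        + ∑ p ∈ P.erase (s0, t0), expCoeff φ (T p) (s0 + t0) := by
    rw [hTe, ← Finset.add_sum_erase _ _ hmem]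
  have hmu : μ (expCoeff φ (f * g) (s0 + t0)) = μ (expCoeff φ (T (s0, t0)) (s0 + t0)) := by
    rw [hEsplit]
    exact h.dom_sum _ _ hT0ne hstrict
  have hub : augVal μ φ γ (f * g) ≤ augVal μ φ γ f + augVal μ φ γ g := by
    calc augVal μ φ γ (f * g)
        ≤ μ (expCoeff φ (f * g) (s0 + t0)) + (s0 + t0) • γ := augVal_le_term _ hu0
      _ = μ (expCoeff φ (T (s0, t0)) (s0 + t0)) + (s0 + t0) • γ := by rw [hmu]
      _ = augVal μ φ γ f + augVal μ φ γ g := hT0val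
  exact le_antisymm hub hge

end NuMul

theorem aux_nsmul_mono {a b : WithTop Λ} (hab : a ≤ b) (n : ℕ) : n • a ≤ n • b := by
  induction n with
  | zero => rw [zero_nsmul, zero_nsmul]
  | succ k ih => rw [succ_nsmul, succ_nsmul]; exact add_le_add ih hab

section MuEquivFacts

variable {μ : Polynomial K → WithTop Λ} (h : ValAx μ)
include h

theorem muEquiv_val_eq {ψ χ : Polynomial K} (he : MuEquiv μ ψ χ) : μ ψ = μ χ := by
  have h2 := h.dom_sub he
  rw [sub_sub_cancel] at h2
  exact h2.symm

theorem muEquiv_symm {ψ χ : Polynomial K} (he : MuEquiv μ ψ χ) : MuEquiv μ χ ψ := by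
  have hval := muEquiv_val_eq h he
  show μ χ < μ (χ - ψ)
  have hneg : χ - ψ = -(ψ - χ) := by ring
  rw [hneg, h.neg, ← hval]
  exact he

theorem muDvd_transfer {ψ χ : Polynomial K} (hval : μ ψ = μ χ) (hsub : μ ψ < μ (ψ - χ))
    (f : Polynomial K) : MuDvd μ ψ f → MuDvd μ χ f := by
  rintro ⟨w, hw⟩
  have hw' : μ f < μ (f - w * ψ) := hw
  have hwψ : μ f ≤ μ (w * ψ) := by
    have h3 : μ (w * ψ) = μ (f - (f - w * ψ)) := by rw [sub_sub_cancel]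
    rw [h3]
    refine le_trans ?_ (h.sub_ge _ _)
    exact le_min le_rfl (le_of_lt hw')
  have hftop : μ f ≠ ⊤ := fun h' => not_top_lt (h' ▸ hw')
  have hbig : μ f < μ (w * (ψ - χ)) := by
    rcases eq_or_ne (μ w) ⊤ with hwt | hwt
    · rw [h.mul, hwt, top_add]
      exact lt_top_iff_ne_top.mpr hftop
    · rw [h.mul]
      calc μ f ≤ μ (w * ψ) := hwψ
        _ = μ w + μ ψ := h.mul _ _
        _ < μ w + μ (ψ - χ) := WithTop.add_lt_add_left hwt hsub
  refine ⟨w, ?_⟩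
  show μ f < μ (f - w * χ)
  have he : f - w * χ = (f - w * ψ) + w * (ψ - χ) := by ring
  rw [he]
  exact lt_of_lt_of_le (lt_min hw' hbig) (h.add _ _)

theorem key_transfer {φ ψ : Polynomial K} (hφ : IsKeyPol μ φ) (hψm : ψ.Monic)
    (hdeg : ψ.natDegree = φ.natDegree) (he : MuEquiv μ ψ φ) : IsKeyPol μ ψ := by
  have hval : μ ψ = μ φ := muEquiv_val_eq h he
  have hsub : μ ψ < μ (ψ - φ) := he
  have hsub' : μ φ < μ (φ - ψ) := muEquiv_symm h he
  have hval' : μ φ = μ ψ := hval.symm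
  have hdege : degree ψ = degree φ := by
    rw [degree_eq_natDegree hψm.ne_zero, degree_eq_natDegree hφ.1.ne_zero, hdeg]
  have t1 : ∀ f, MuDvd μ ψ f → MuDvd μ φ f := muDvd_transfer h hval hsub
  have t2 : ∀ f, MuDvd μ φ f → MuDvd μ ψ f := muDvd_transfer h hval' hsub'
  refine ⟨hψm, ⟨by rw [hdeg]; exact hφ.2.1.1, fun f hf0 hdf hdvd =>
    hφ.2.1.2 f hf0 (by rwa [← hdege]) (t1 f hdvd)⟩, ?_, ?_, ?_⟩
  · rw [hval]; exact hφ.2.2.1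
  · rintro ⟨f, hfe⟩
    refine key_not_dvd_one h hφ (t1 1 ⟨f, ?_⟩)
    exact muEquiv_symm h hfe
  · intro f g hdvd
    exact (hφ.2.2.2.2 f g (t1 _ hdvd)).imp (t2 f) (t2 g)

end MuEquivFacts

section NuStruct

variable {v : FieldVal K Λ} {μ : Polynomial K → WithTop Λ} {φ : Polynomial K} {γ : WithTop Λ}
  (h : ValAx μ) (hφ : IsKeyPol μ φ) (hγ : μ φ < γ)
include h hφ

theorem augVal_le_term_any (f : Polynomial K) (s : ℕ) :
    augVal μ φ γ f ≤ μ (expCoeff φ f s) + s • γ := by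
  rcases le_or_gt s f.natDegree with hle | hlt
  · exact augVal_le_term f hle
  · rw [expCoeff_eq_zero_of_lt hφ.1 hφ.2.1.1 hlt, h.zero', top_add]
    exact le_top

theorem nu_add (f g : Polynomial K) :
    min (augVal μ φ γ f) (augVal μ φ γ g) ≤ augVal μ φ γ (f + g) := by
  rw [augVal_eq_inf h.zero' hφ.1 hφ.2.1.1 (f + g) (max f.natDegree g.natDegree)
    (le_trans (natDegree_add_le f g) le_rfl)]
  refine Finset.le_inf' _ _ fun s hs => ?_
  rw [expCoeff_add hφ.1]
  calc min (augVal μ φ γ f) (augVal μ φ γ g)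
      ≤ min (μ (expCoeff φ f s) + s • γ) (μ (expCoeff φ g s) + s • γ) :=
        min_le_min (augVal_le_term_any h hφ f s) (augVal_le_term_any h hφ g s)
    _ = min (μ (expCoeff φ f s)) (μ (expCoeff φ g s)) + s • γ :=
        min_add_add_right _ _ _
    _ ≤ μ (expCoeff φ f s + expCoeff φ g s) + s • γ := add_le_add_left (h.add _ _) _

theorem nu_one : augVal μ φ γ (1 : Polynomial K) = 0 := by
  rw [nu_small h hφ (by rw [degree_one]; exact key_degree_pos h hφ), h.one]

include hγ

theorem nu_valAx : ValAx (augVal μ φ γ) :=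
  ⟨nu_one h hφ, augVal_zero h.zero', nu_mul h hφ hγ, nu_add h hφ⟩

theorem nu_valT (hμ : IsValT v μ) : IsValT v (augVal μ φ γ) := by
  refine ⟨nu_one h hφ, augVal_zero h.zero', nu_mul h hφ hγ, nu_add h hφ, fun a => ?_⟩
  rw [nu_small h hφ (lt_of_le_of_lt degree_C_le (key_degree_pos h hφ))]
  exact hμ.2.2.2.2 a

theorem mu_le_nu (f : Polynomial K) : μ f ≤ augVal μ φ γ f := by
  rw [val_eq_augVal h hφ.1 hφ.2.1.1 hφ.2.1.2 f]
  refine le_augVal f fun s hs => ?_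
  calc augVal μ φ (μ φ) f ≤ μ (expCoeff φ f s) + s • μ φ := augVal_le_term f hs
    _ ≤ μ (expCoeff φ f s) + s • γ := add_le_add_right (aux_nsmul_mono (le_of_lt hγ) s) _

theorem mu_lt_nu : μ < augVal μ φ γ := by
  refine lt_iff_le_and_ne.mpr ⟨fun f => mu_le_nu h hφ hγ f, fun he => ?_⟩
  have := congrFun he φ
  rw [nu_phi h hφ hγ] at this
  exact absurd (this ▸ hγ) (lt_irrefl _)

theorem tangent_eq : TangentDir μ (augVal μ φ γ) = KeyPolClass μ φ := by
  ext ψ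
  constructor
  · rintro ⟨hψm, hψlt, hψmin⟩
    have hdle : ψ.natDegree ≤ φ.natDegree :=
      hψmin φ hφ.1 (by rw [nu_phi h hφ hγ]; exact hγ)
    have hdge : ¬ ψ.natDegree < φ.natDegree := by
      intro hlt
      have hdeg : degree ψ < degree φ := by
        rw [degree_eq_natDegree hψm.ne_zero, degree_eq_natDegree hφ.1.ne_zero]
        exact_mod_cast hlt
      rw [nu_small h hφ hdeg] at hψlt
      exact absurd hψlt (lt_irrefl _)
    have hdeq : ψ.natDegree = φ.natDegree := by omega
    have hmv : μ ψ = min (μ (ψ - φ)) (μ φ) := by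
      rw [val_eq_augVal h hφ.1 hφ.2.1.1 hφ.2.1.2 ψ, augVal_monic_same_deg h hφ hψm hdeq]
    have hnv : augVal μ φ γ ψ = min (μ (ψ - φ)) γ := augVal_monic_same_deg h hφ hψm hdeq γ
    have hsub : μ φ < μ (ψ - φ) := by
      by_contra hc
      push_neg at hc
      rw [hnv, min_eq_left (le_trans hc (le_of_lt hγ)), hmv, min_eq_left hc] at hψlt
      exact absurd hψlt (lt_irrefl _)
    have hvaleq : μ ψ = μ φ := by rw [hmv, min_eq_right (le_of_lt hsub)]
    have he : MuEquiv μ ψ φ := by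
      show μ ψ < μ (ψ - φ)
      rw [hvaleq]
      exact hsub
    exact ⟨key_transfer h hφ hψm hdeq he, he⟩
  · rintro ⟨hψkey, hψeq⟩
    have hval : μ ψ = μ φ := muEquiv_val_eq h hψeq
    have hd1 : ¬ degree ψ < degree φ := by
      intro hlt
      refine hφ.2.1.2 ψ hψkey.1.ne_zero hlt ⟨1, ?_⟩
      show μ ψ < μ (ψ - 1 * φ)
      rw [one_mul]
      exact hψeq
    have hd2 : ¬ degree φ < degree ψ := by
      intro hlt
      refine hψkey.2.1.2 φ hφ.1.ne_zero hlt ⟨1, ?_⟩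
      show μ φ < μ (φ - 1 * ψ)
      rw [one_mul]
      exact muEquiv_symm h hψeq
    have hdeq : ψ.natDegree = φ.natDegree :=
      natDegree_eq_of_degree_eq (le_antisymm (not_lt.mp hd2) (not_lt.mp hd1))
    refine ⟨hψkey.1, ?_, ?_⟩
    · rw [augVal_monic_same_deg h hφ hψkey.1 hdeq γ]
      exact lt_min hψeq (hval ▸ hγ)
    · intro χ hχm hχlt
      by_contra hc
      push_neg at hc
      rw [hdeq] at hc
      have hdeg : degree χ < degree φ := by
        rw [degree_eq_natDegree hχm.ne_zero, degree_eq_natDegree hφ.1.ne_zero]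
        exact_mod_cast hc
      rw [nu_small h hφ hdeg] at hχlt
      exact absurd hχlt (lt_irrefl _)

end NuStruct

section NuFinal

variable {μ : Polynomial K → WithTop Λ} {φ : Polynomial K} {γ : WithTop Λ}
  (h : ValAx μ) (hφ : IsKeyPol μ φ)
include h hφ

theorem nu_dvd_top_iff (hγt : γ = ⊤) (f : Polynomial K) :
    augVal μ φ γ f = ⊤ ↔ φ ∣ f := by
  rw [nu_top_iff h hφ]
  constructor
  · rintro (rfl | ⟨_, hd⟩)
    · exact dvd_zero φ
    · exact hd
  · intro hd
    exact Or.inr ⟨hγt, hd⟩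

variable (hγ : μ φ < γ)
include hγ

theorem nu_valGroup :
    valGroup (augVal μ φ γ) =
      AddSubgroup.closure
        ({δ : Λ | ∃ a : Polynomial K, a.degree < φ.degree ∧ μ a = (δ : WithTop Λ)} ∪
          {δ : Λ | γ = (δ : WithTop Λ)}) := by
  apply le_antisymm
  · rw [valGroup]
    refine (AddSubgroup.closure_le _).mpr ?_
    rintro δ ⟨f, hf⟩
    obtain ⟨s, hs, hterm⟩ := exists_augVal (μ := μ) (ψ := φ) (γ := γ) f
    rw [hf] at hterm
    have hene : μ (expCoeff φ f s) ≠ ⊤ := by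
      intro h'
      rw [h', top_add] at hterm
      exact WithTop.coe_ne_top hterm
    have hsγ : s • γ ≠ ⊤ := by
      intro h'
      rw [h', add_top] at hterm
      exact WithTop.coe_ne_top hterm
    rcases eq_or_ne γ ⊤ with rfl | hγt
    · have hs0 : s = 0 := by
        by_contra hs0
        exact hsγ (aux_smul_top hs0)
      subst hs0
      rw [zero_nsmul, add_zero] at hterm
      exact AddSubgroup.subset_closure (Set.mem_union_left _
        ⟨expCoeff φ f 0, degree_expCoeff_lt hφ.1 f 0, hterm.symm⟩)
    · lift γ to Λ using hγt with c hc
      obtain ⟨α, hα⟩ := WithTop.ne_top_iff_exists.mp hene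
      rw [← hα, aux_coe_smul, ← WithTop.coe_add] at hterm
      have hδ : δ = α + s • c := WithTop.coe_inj.mp hterm
      rw [hδ]
      refine AddSubgroup.add_mem _ ?_ (AddSubgroup.nsmul_mem _ ?_ s)
      · exact AddSubgroup.subset_closure (Set.mem_union_left _
          ⟨expCoeff φ f s, degree_expCoeff_lt hφ.1 f s, hα.symm⟩)
      · exact AddSubgroup.subset_closure (Set.mem_union_right _ rfl)
  · refine (AddSubgroup.closure_le _).mpr ?_
    rintro δ (⟨a, hdeg, hval⟩ | hγδ)
    · refine AddSubgroup.subset_closure ⟨a, ?_⟩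
      rw [nu_small h hφ hdeg]
      exact hval
    · refine AddSubgroup.subset_closure ⟨φ, ?_⟩
      rw [nu_phi h hφ hγ]
      exact hγδ

theorem phi_nu_minimal : IsMuMinimal (augVal μ φ γ) φ := by
  refine ⟨hφ.2.1.1, fun f hf0 hdf hdvd => ?_⟩
  obtain ⟨w, hw⟩ := hdvd
  have hw' : augVal μ φ γ f < augVal μ φ γ (f - w * φ) := hw
  have hb : augVal μ φ γ (f - w * φ) ≤ μ ((f - w * φ) %ₘ φ) := augVal_le_zeroth hφ.1 _
  rw [sub_modByMonic, (modByMonic_eq_zero_iff_dvd hφ.1).mpr (dvd_mul_left φ w), sub_zero,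
    (modByMonic_eq_self_iff hφ.1).mpr hdf] at hb
  rw [nu_small h hφ hdf] at hw'
  exact absurd (lt_of_lt_of_le hw' hb) (lt_irrefl _)

theorem nu_dvd_iff (g : Polynomial K) :
    MuDvd (augVal μ φ γ) φ g ↔ augVal μ φ γ g < μ (g %ₘ φ) := by
  constructor
  · rintro ⟨w, hw⟩
    have hw' : augVal μ φ γ g < augVal μ φ γ (g - w * φ) := hw
    have hb : augVal μ φ γ (g - w * φ) ≤ μ ((g - w * φ) %ₘ φ) := augVal_le_zeroth hφ.1 _
    rw [sub_modByMonic, (modByMonic_eq_zero_iff_dvd hφ.1).mpr (dvd_mul_left φ w),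
      sub_zero] at hb
    exact lt_of_lt_of_le hw' hb
  · intro hlt
    refine ⟨g /ₘ φ, ?_⟩
    show augVal μ φ γ g < augVal μ φ γ (g - (g /ₘ φ) * φ)
    have he : g - (g /ₘ φ) * φ = g %ₘ φ := by
      linear_combination -(modByMonic_add_div g φ)
    rw [he, nu_small h hφ (degree_modByMonic_lt g hφ.1)]
    exact hlt

theorem phi_nu_irred (hγt : γ ≠ ⊤) : IsMuIrreducible (augVal μ φ γ) φ := by
  have hν : ValAx (augVal μ φ γ) := nu_valAx h hφ hγ
  refine ⟨by rw [nu_phi h hφ hγ]; exact hγt, ?_, ?_⟩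
  · rintro ⟨f, hfe⟩
    have hval : augVal μ φ γ (f * φ) = augVal μ φ γ 1 := muEquiv_val_eq hν hfe
    have hfe' : augVal μ φ γ (f * φ) < augVal μ φ γ (f * φ - 1) := hfe
    have hb : augVal μ φ γ (f * φ - 1) ≤ μ ((f * φ - 1) %ₘ φ) := augVal_le_zeroth hφ.1 _
    have hmod : (f * φ - 1) %ₘ φ = -1 := by
      rw [sub_modByMonic, (modByMonic_eq_zero_iff_dvd hφ.1).mpr (dvd_mul_left φ f),
        (modByMonic_eq_self_iff hφ.1).mpr
          (by rw [degree_one]; exact key_degree_pos h hφ), zero_sub]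
    rw [hmod, h.neg, h.one] at hb
    rw [hval, nu_one h hφ] at hfe'
    exact absurd (lt_of_lt_of_le hfe' hb) (lt_irrefl _)
  · intro f g hdvd
    by_contra hc
    push_neg at hc
    obtain ⟨hnf, hng⟩ := hc
    have hnf' : ¬ (augVal μ φ γ f < μ (f %ₘ φ)) :=
      fun hlt => hnf ((nu_dvd_iff h hφ hγ f).mpr hlt)
    have hng' : ¬ (augVal μ φ γ g < μ (g %ₘ φ)) :=
      fun hlt => hng ((nu_dvd_iff h hφ hγ g).mpr hlt)
    have hf' : augVal μ φ γ f = μ (f %ₘ φ) :=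
      le_antisymm (augVal_le_zeroth hφ.1 f) (not_lt.mp hnf')
    have hg' : augVal μ φ γ g = μ (g %ₘ φ) :=
      le_antisymm (augVal_le_zeroth hφ.1 g) (not_lt.mp hng')
    have hmodeq : (f * g) %ₘ φ = ((f %ₘ φ) * (g %ₘ φ)) %ₘ φ := by
      refine modByMonic_eq_of_dvd_sub hφ.1 ?_
      have he : f * g - (f %ₘ φ) * (g %ₘ φ)
          = f * (g - g %ₘ φ) + (f - f %ₘ φ) * (g %ₘ φ) := by ring
      rw [he]
      refine dvd_add (Dvd.dvd.mul_left ?_ f) (Dvd.dvd.mul_right ?_ _)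
      · exact ⟨g /ₘ φ, by linear_combination -(modByMonic_add_div g φ)⟩
      · exact ⟨f /ₘ φ, by linear_combination -(modByMonic_add_div f φ)⟩
    have hdvd' := (nu_dvd_iff h hφ hγ (f * g)).mp hdvd
    rw [hmodeq, prod_small_mod h hφ (degree_modByMonic_lt f hφ.1)
      (degree_modByMonic_lt g hφ.1), ← hf', ← hg', ← nu_mul h hφ hγ] at hdvd'
    exact absurd hdvd' (lt_irrefl _)

theorem phi_nu_key (hγt : γ ≠ ⊤) : IsKeyPol (augVal μ φ γ) φ :=
  ⟨hφ.1, phi_nu_minimal h hφ hγ, phi_nu_irred h hφ hγ hγt⟩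

theorem nu_key_degree_ge {ψ : Polynomial K} (hψ : IsKeyPol (augVal μ φ γ) ψ) :
    φ.natDegree ≤ ψ.natDegree := by
  by_contra hc
  push_neg at hc
  have hν : ValAx (augVal μ φ γ) := nu_valAx h hφ hγ
  have hdeg : degree ψ < degree φ := by
    rw [degree_eq_natDegree hψ.1.ne_zero, degree_eq_natDegree hφ.1.ne_zero]
    exact_mod_cast hc
  have hexp := val_eq_augVal hν hψ.1 hψ.2.1.1 hψ.2.1.2 φ
  have hle : augVal (augVal μ φ γ) ψ (augVal μ φ γ ψ) φ ≤ μ φ := by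
    have hsum := sum_expCoeff hψ.1 hψ.2.1.1 φ.natDegree φ le_rfl
    conv_rhs => rw [← hsum]
    refine h.sum_ge _ _ fun s hs => ?_
    have hs' : s ≤ φ.natDegree := by have := Finset.mem_range.mp hs; omega
    have hterm := augVal_le_term (μ := augVal μ φ γ) (ψ := ψ)
      (γ := augVal μ φ γ ψ) φ hs'
    have h1 : augVal μ φ γ (expCoeff ψ φ s) = μ (expCoeff ψ φ s) :=
      nu_small h hφ (lt_trans (degree_expCoeff_lt hψ.1 φ s) hdeg)
    have h2 : augVal μ φ γ ψ = μ ψ := nu_small h hφ hdeg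
    rw [h.mul, h.pow]
    refine le_trans hterm (le_of_eq ?_)
    rw [h1, h2]
  rw [← hexp, nu_phi h hφ hγ] at hle
  exact absurd (lt_of_lt_of_le hγ hle) (lt_irrefl _)

theorem phi_nu_minkey (hγt : γ ≠ ⊤) : IsMinKeyPol (augVal μ φ γ) φ :=
  ⟨phi_nu_key h hφ hγ hγt, fun ψ hψ => nu_key_degree_ge h hφ hγ hψ⟩

theorem nu_degOf (hγt : γ ≠ ⊤) : degOf (augVal μ φ γ) = φ.natDegree := by
  apply le_antisymm
  · exact Nat.sInf_le ⟨φ, phi_nu_key h hφ hγ hγt, rfl⟩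
  · refine le_csInf ⟨φ.natDegree, φ, phi_nu_key h hφ hγ hγt, rfl⟩ ?_
    rintro n ⟨ψ, hψ, rfl⟩
    exact nu_key_degree_ge h hφ hγ hψ

end NuFinal

end Aux

end MLV

open MLV

/-- Properties of the augmented valuation `ν = [μ; φ, γ]`. -/
theorem statement_3 {K : Type*} [Field K] {Λ : Type*} [AddCommGroup Λ] [LinearOrder Λ] [IsOrderedAddMonoid Λ]
    (v : FieldVal K Λ) (μ : Polynomial K → WithTop Λ) (hμ : IsValT v μ)
    (hin : IsInnerNode μ) (φ : Polynomial K) (hφ : IsKeyPol μ φ)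
    (γ : WithTop Λ) (hγ : μ φ < γ) :
    IsValT v (augVal μ φ γ) ∧ μ < augVal μ φ γ ∧ augVal μ φ γ φ = γ ∧
      TangentDir μ (augVal μ φ γ) = KeyPolClass μ φ ∧
      valGroup (augVal μ φ γ) =
        AddSubgroup.closure
          ({δ : Λ | ∃ a : Polynomial K, a.degree < φ.degree ∧ μ a = (δ : WithTop Λ)} ∪
            {δ : Λ | γ = (δ : WithTop Λ)}) ∧
      (γ = ⊤ → ∀ f : Polynomial K, (augVal μ φ γ f = ⊤ ↔ φ ∣ f)) ∧
      (γ ≠ ⊤ → IsMinKeyPol (augVal μ φ γ) φ ∧ degOf (augVal μ φ γ) = φ.natDegree) := by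
  have h : MLV.ValAx μ := MLV.ValAx.ofIsValT hμ
  refine ⟨nu_valT h hφ hγ hμ, mu_lt_nu h hφ hγ, nu_phi h hφ hγ, tangent_eq h hφ hγ,
    nu_valGroup h hφ hγ, fun hγt f => nu_dvd_top_iff h hφ hγt f,
    fun hγt => ⟨phi_nu_minkey h hφ hγ hγt, nu_degOf h hφ hγ hγt⟩⟩
end
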